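/- arXiv:1909.12817 — 6 statements merged into one kernel-verified Lean document; each statement's English description precedes it below -/
import Mathlib

section
/- If two closed geodesics (non-backtracking closed walks) of length g in a graph G of girth g share a common subwalk of length ⌊g/2⌋ + 1, then they coincide. -/
open SimpleGraph List

section Aux

variable {V : Type*} {G : SimpleGraph V}

def DartChain (x y : V) (l : List G.Dart) : Prop :=
  l.map (·.fst) ++ [y] = x :: l.map (·.snd)

lemma dartChain_nil_iff {x y : V} : DartChain x y ([] : List G.Dart) ↔ x = y := by
  simp [DartChain, eq_comm]

lemma dartChain_cons_iff {x y : V} {d : G.Dart} {t : List G.Dart} :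
    DartChain x y (d :: t) ↔ d.fst = x ∧ DartChain d.snd y t := by
  simp [DartChain]

lemma dartChain_darts {x y : V} (w : G.Walk x y) : DartChain x y w.darts := by
  unfold DartChain
  rw [Walk.map_fst_darts_append, ← Walk.cons_map_snd_darts]

lemma dartChain_split {x y : V} {s t : List G.Dart} (h : DartChain x y (s ++ t)) :
    ∃ m, DartChain x m s ∧ DartChain m y t := by
  induction s generalizing x with
  | nil => exact ⟨x, dartChain_nil_iff.mpr rfl, h⟩
  | cons d s ih =>
    rw [cons_append, dartChain_cons_iff] at h
    obtain ⟨m, h1, h2⟩ := ih h.2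
    exact ⟨m, dartChain_cons_iff.mpr ⟨h.1, h1⟩, h2⟩

lemma dartChain_join {x m y : V} {s t : List G.Dart}
    (hs : DartChain x m s) (ht : DartChain m y t) : DartChain x y (s ++ t) := by
  induction s generalizing x with
  | nil => rwa [dartChain_nil_iff.mp hs, nil_append]
  | cons d s ih =>
    rw [dartChain_cons_iff] at hs
    exact dartChain_cons_iff.mpr ⟨hs.1, ih hs.2⟩

lemma dartChain_y_unique {x y y' : V} {l : List G.Dart}
    (h : DartChain x y l) (h' : DartChain x y' l) : y = y' := by
  unfold DartChain at h h'
  have := h.trans h'.symm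
  simpa using List.append_inj_right this rfl

lemma dartChain_getLast_snd {x y : V} {l : List G.Dart} (h : DartChain x y l) (hne : l ≠ []) :
    (l.getLast hne).snd = y := by
  induction l generalizing x with
  | nil => simp at hne
  | cons d t ih =>
    rw [dartChain_cons_iff] at h
    rcases eq_or_ne t [] with rfl | hte
    · rw [dartChain_nil_iff] at h
      simpa using h.2
    · rw [List.getLast_cons hte]
      exact ih h.2 hte

/-- Build a walk from a list of darts satisfying the chain condition. -/
def buildWalk : (l : List G.Dart) → (x y : V) → DartChain x y l → G.Walk x y
  | [], _, _, h => SimpleGraph.Walk.nil.copy rfl (dartChain_nil_iff.mp h)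
  | d :: t, _, y, h =>
      (SimpleGraph.Walk.cons d.adj (buildWalk t d.snd y (dartChain_cons_iff.mp h).2)).copy
        (dartChain_cons_iff.mp h).1 rfl

@[simp] lemma darts_buildWalk : ∀ (l : List G.Dart) (x y : V) (h : DartChain x y l),
    (buildWalk l x y h).darts = l
  | [], _, _, h => by simp [buildWalk]
  | d :: t, x, y, h => by
      simp only [buildWalk, SimpleGraph.Walk.darts_copy, SimpleGraph.Walk.darts_cons]
      rw [darts_buildWalk t d.snd y _]

lemma exists_dup_of_not_nodup_map {α β : Type*} (f : α → β) :
    ∀ (l : List α), ¬(l.map f).Nodup →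
      ∃ (a b : α) (l₁ l₂ l₃ : List α), l = l₁ ++ a :: (l₂ ++ b :: l₃) ∧ f a = f b
  | [], h => by simp at h
  | c :: t, h => by
      rw [map_cons, nodup_cons] at h
      push_neg at h
      by_cases hc : f c ∈ t.map f
      · obtain ⟨b, hb, hfb⟩ := List.mem_map.mp hc
        obtain ⟨l₂, l₃, rfl⟩ := List.append_of_mem hb
        exact ⟨c, b, [], l₂, l₃, rfl, hfb.symm⟩
      · obtain ⟨a, b, l₁, l₂, l₃, rfl, hfab⟩ := exists_dup_of_not_nodup_map f t (h hc)
        exact ⟨a, b, c :: l₁, l₂, l₃, rfl, hfab⟩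

/-- Any nonempty non-backtracking closed chain of darts contains a cycle of at most
its length. -/
lemma exists_cycle_of_dartChain :
    ∀ (n : ℕ) (x : V) (l : List G.Dart), l ≠ [] → l.length ≤ n → DartChain x x l →
      l.Chain' (fun d₁ d₂ => d₂ ≠ d₁.symm) →
      ∃ (u : V) (c : G.Walk u u), c.IsCycle ∧ c.length ≤ l.length := by
  intro n
  induction n with
  | zero =>
    intro x l hne hlen _ _
    rw [Nat.le_zero, List.length_eq_zero_iff] at hlen
    exact absurd hlen hne
  | succ n ih =>
    intro x l hne hlen hdc hch
    by_cases hnd : (l.map (·.snd)).Nodup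
    · -- the walk built from `l` is itself a cycle
      refine ⟨x, buildWalk l x x hdc, ⟨⟨⟨?_⟩, ?_⟩, ?_⟩, ?_⟩
      · -- trail: edges nodup
        show ((buildWalk l x x hdc).darts.map Dart.edge).Nodup
        rw [darts_buildWalk]
        by_contra hdup
        obtain ⟨d, e, l₁, l₂, l₃, rfl, hde⟩ := exists_dup_of_not_nodup_map Dart.edge l hdup
        rcases (SimpleGraph.dart_edge_eq_iff d e).mp hde with rfl | rfl
        · -- repeated dart: snd repeats
          rw [map_append, map_cons] at hnd
          have h1 := hnd.of_append_right
          exact (List.nodup_cons.mp h1).1 (by simp)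
        · -- the first dart is e.symm
          obtain ⟨m1, -, h2⟩ := dartChain_split hdc
          rw [dartChain_cons_iff] at h2
          obtain ⟨m2, h4, h5⟩ := dartChain_split h2.2
          rw [dartChain_cons_iff] at h5
          rcases eq_or_ne l₂ [] with rfl | hl2
          · have hpair : [e.symm, e] <:+: l₁ ++ e.symm :: ([] ++ e :: l₃) := ⟨l₁, l₃, by simp⟩
            have := List.isChain_pair.mp (hch.infix hpair)
            simp at this
          · have hgl := dartChain_getLast_snd h4 hl2
            have hmem : m2 ∈ l₂.map (·.snd) :=
              List.mem_map.mpr ⟨l₂.getLast hl2, List.getLast_mem hl2, hgl⟩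
            rw [map_append, map_cons] at hnd
            have h1 := hnd.of_append_right
            refine (List.nodup_cons.mp h1).1 ?_
            have hfst : (e.symm).snd = m2 := by
              have : e.fst = m2 := h5.1
              simpa using this
            rw [hfst]
            rw [map_append]
            exact List.mem_append.mpr (Or.inl hmem)
      · -- ne nil
        intro hnil
        apply hne
        have := darts_buildWalk l x x hdc
        rw [hnil] at this
        simpa using this.symm
      · -- support tail nodup
        have hs := SimpleGraph.Walk.cons_map_snd_darts (buildWalk l x x hdc)
        rw [darts_buildWalk] at hs
        rw [← hs]
        simpa using hnd
      · rw [← SimpleGraph.Walk.length_darts, darts_buildWalk]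
    · -- a repeated vertex: cut out a shorter closed chain and recurse
      obtain ⟨d, e, l₁, l₂, l₃, rfl, hde⟩ := exists_dup_of_not_nodup_map (·.snd) l hnd
      obtain ⟨m1, -, h2⟩ := dartChain_split hdc
      rw [dartChain_cons_iff] at h2
      obtain ⟨m2, h4, h5⟩ := dartChain_split h2.2
      rw [dartChain_cons_iff] at h5
      have hjoin : DartChain d.snd e.snd (l₂ ++ [e]) :=
        dartChain_join h4 (dartChain_cons_iff.mpr ⟨h5.1, dartChain_nil_iff.mpr rfl⟩)
      rw [← hde] at hjoin
      have hinfix : (l₂ ++ [e]) <:+: l₁ ++ d :: (l₂ ++ e :: l₃) := ⟨l₁ ++ [d], l₃, by simp⟩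
      obtain ⟨u, c, hc, hlc⟩ := ih d.snd (l₂ ++ [e]) (by simp)
        (by simp only [List.length_append] at hlen ⊢; simp at hlen ⊢; omega)
        hjoin (hch.infix hinfix)
      exact ⟨u, c, hc, hlc.trans (by simp; omega)⟩

lemma girth_le_of_isCycle {g : ℕ} (hg : G.girth = g) {a : V} {c : G.Walk a a}
    (hc : c.IsCycle) : g ≤ c.length := by
  have h1 : G.egirth ≤ (c.length : ℕ∞) :=
    iInf_le_of_le a (iInf_le_of_le c (iInf_le_of_le hc le_rfl))
  have h2 := ENat.toNat_le_toNat h1 (by simp)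
  rw [show G.egirth.toNat = G.girth from rfl, hg] at h2
  simpa using h2

lemma chain'_reverse_symm {l : List G.Dart}
    (h : l.Chain' (fun d₁ d₂ => d₂ ≠ d₁.symm)) :
    ((l.map Dart.symm).reverse).Chain' (fun d₁ d₂ => d₂ ≠ d₁.symm) := by
  unfold List.Chain' at h ⊢
  rw [List.isChain_reverse, List.isChain_map]
  refine h.imp ?_
  intro a b hab
  show a.symm ≠ b.symm.symm
  simp only [Dart.symm_symm]
  intro hba
  exact hab hba.symm

/-- Two short non-backtracking walks with the same endpoints have the same darts. -/
lemma darts_eq_of_nonbacktracking_short {g : ℕ} (hg : G.girth = g) :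
    ∀ (n : ℕ) {y x : V} (p q : G.Walk y x),
      p.darts.Chain' (fun d₁ d₂ => d₂ ≠ d₁.symm) →
      q.darts.Chain' (fun d₁ d₂ => d₂ ≠ d₁.symm) →
      p.length + q.length ≤ n → p.length + q.length < g → p.darts = q.darts := by
  intro n
  induction n with
  | zero =>
    intro y x p q _ _ hlen _
    have hp : p.darts.length = 0 := by rw [SimpleGraph.Walk.length_darts]; omega
    have hq : q.darts.length = 0 := by rw [SimpleGraph.Walk.length_darts]; omega
    rw [List.length_eq_zero_iff] at hp hq
    rw [hp, hq]
  | succ n ih =>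
    intro y x p q hcp hcq hlen hlt
    cases p with
    | nil =>
      by_contra hne'
      have hqne : q.darts ≠ [] := fun h => hne' (by simp [h])
      obtain ⟨u, c, hc, hlc⟩ := exists_cycle_of_dartChain q.darts.length y q.darts hqne
        le_rfl (dartChain_darts q) hcq
      have := girth_le_of_isCycle hg hc
      rw [SimpleGraph.Walk.length_darts] at hlc
      simp only [SimpleGraph.Walk.length_nil] at hlt
      omega
    | @cons _ b _ hadj p' =>
      cases q with
      | nil =>
        by_contra hne'
        have hpne : (SimpleGraph.Walk.cons hadj p').darts ≠ [] := by
          simp [SimpleGraph.Walk.darts_cons]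
        obtain ⟨u, c, hc, hlc⟩ := exists_cycle_of_dartChain _ y _ hpne
          le_rfl (dartChain_darts (SimpleGraph.Walk.cons hadj p')) hcp
        have := girth_le_of_isCycle hg hc
        rw [SimpleGraph.Walk.length_darts] at hlc
        simp only [SimpleGraph.Walk.length_nil] at hlt
        omega
      | @cons _ b' _ hadj' q' =>
        by_cases hb : b = b'
        · subst hb
          have hcp' : p'.darts.Chain' (fun d₁ d₂ => d₂ ≠ d₁.symm) := by
            rw [SimpleGraph.Walk.darts_cons] at hcp; exact hcp.tail
          have hcq' : q'.darts.Chain' (fun d₁ d₂ => d₂ ≠ d₁.symm) := by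
            rw [SimpleGraph.Walk.darts_cons] at hcq; exact hcq.tail
          have hrec := ih p' q' hcp' hcq'
            (by simp only [SimpleGraph.Walk.length_cons] at hlen; omega)
            (by simp only [SimpleGraph.Walk.length_cons] at hlt ⊢; omega)
          simp [SimpleGraph.Walk.darts_cons, hrec]
        · -- first darts differ
          set P := SimpleGraph.Walk.cons hadj p' with hP
          set Q := SimpleGraph.Walk.cons hadj' q' with hQ
          have hPne : P.darts ≠ [] := by simp [hP, SimpleGraph.Walk.darts_cons]
          have hQne : Q.darts ≠ [] := by simp [hQ, SimpleGraph.Walk.darts_cons]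
          by_cases hlast : P.darts.getLast hPne = Q.darts.getLast hQne
          · -- same last dart: strip it via reverses
            have hPr : P.reverse.darts.head? = some ((P.darts.getLast hPne).symm) := by
              rw [SimpleGraph.Walk.darts_reverse, List.head?_reverse, List.getLast?_map,
                List.getLast?_eq_getLast_of_ne_nil hPne, Option.map_some]
            have hQr : Q.reverse.darts.head? = some ((Q.darts.getLast hQne).symm) := by
              rw [SimpleGraph.Walk.darts_reverse, List.head?_reverse, List.getLast?_map,
                List.getLast?_eq_getLast_of_ne_nil hQne, Option.map_some]
            have hnn : ¬ P.reverse.Nil := by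
              rw [SimpleGraph.Walk.nil_iff_length_eq, SimpleGraph.Walk.length_reverse]
              simp [hP]
            have hnn' : ¬ Q.reverse.Nil := by
              rw [SimpleGraph.Walk.nil_iff_length_eq, SimpleGraph.Walk.length_reverse]
              simp [hQ]
            obtain ⟨z, ha, pr₂, hpr⟩ := SimpleGraph.Walk.not_nil_iff.mp hnn
            obtain ⟨z', ha', qr₂, hqr⟩ := SimpleGraph.Walk.not_nil_iff.mp hnn'
            rw [hpr, SimpleGraph.Walk.darts_cons, List.head?_cons] at hPr
            rw [hqr, SimpleGraph.Walk.darts_cons, List.head?_cons] at hQr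
            have hdeq : (⟨(x, z), ha⟩ : G.Dart) = ⟨(x, z'), ha'⟩ := by
              have := (Option.some_injective _ hPr).trans
                ((congrArg (fun d => Dart.symm d) hlast).trans
                  (Option.some_injective _ hQr).symm)
              exact this
            have hz : z = z' := congrArg (·.snd) hdeq
            subst hz
            have hcpr : pr₂.darts.Chain' (fun d₁ d₂ => d₂ ≠ d₁.symm) := by
              have := chain'_reverse_symm hcp
              rw [← SimpleGraph.Walk.darts_reverse, hpr, SimpleGraph.Walk.darts_cons] at this
              exact this.tail
            have hcqr : qr₂.darts.Chain' (fun d₁ d₂ => d₂ ≠ d₁.symm) := by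
              have := chain'_reverse_symm hcq
              rw [← SimpleGraph.Walk.darts_reverse, hqr, SimpleGraph.Walk.darts_cons] at this
              exact this.tail
            have hlp : P.length = pr₂.length + 1 := by
              rw [← SimpleGraph.Walk.length_reverse, hpr, SimpleGraph.Walk.length_cons]
            have hlq : Q.length = qr₂.length + 1 := by
              rw [← SimpleGraph.Walk.length_reverse, hqr, SimpleGraph.Walk.length_cons]
            have hrec := ih pr₂ qr₂ hcpr hcqr (by omega) (by omega)
            have hrev : P.reverse.darts = Q.reverse.darts := by
              rw [hpr, hqr, SimpleGraph.Walk.darts_cons, SimpleGraph.Walk.darts_cons, hrec]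
            rw [SimpleGraph.Walk.darts_reverse, SimpleGraph.Walk.darts_reverse] at hrev
            have := List.reverse_injective hrev
            exact List.map_injective_iff.mpr Dart.symm_involutive.injective this
          · -- last darts differ: glue into a closed non-backtracking walk
            exfalso
            have hQr : Q.reverse.darts.head? = some ((Q.darts.getLast hQne).symm) := by
              rw [SimpleGraph.Walk.darts_reverse, List.head?_reverse, List.getLast?_map,
                List.getLast?_eq_getLast_of_ne_nil hQne, Option.map_some]
            have hch : ((P.append Q.reverse).darts).Chain' (fun d₁ d₂ => d₂ ≠ d₁.symm) := by
              rw [SimpleGraph.Walk.darts_append]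
              refine List.isChain_append.mpr ⟨hcp, ?_, ?_⟩
              · rw [SimpleGraph.Walk.darts_reverse]
                exact chain'_reverse_symm hcq
              · intro dp hdp dq hdq
                rw [List.getLast?_eq_getLast_of_ne_nil hPne, Option.mem_def,
                  Option.some_inj] at hdp
                rw [hQr, Option.mem_def, Option.some_inj] at hdq
                subst hdp; subst hdq
                intro heq
                exact hlast (Dart.symm_involutive.injective heq).symm
            have hwne : (P.append Q.reverse).darts ≠ [] := by
              rw [SimpleGraph.Walk.darts_append]
              intro h
              exact hPne (List.append_eq_nil_iff.mp h).1
            obtain ⟨u, c, hc, hlc⟩ := exists_cycle_of_dartChain _ y _ hwne le_rfl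
              (dartChain_darts (P.append Q.reverse)) hch
            have hgle := girth_le_of_isCycle hg hc
            rw [SimpleGraph.Walk.length_darts, SimpleGraph.Walk.length_append,
              SimpleGraph.Walk.length_reverse] at hlc
            omega

lemma prefix_rotation_of_infix {α : Type*} {l d : List α} (h : l <:+: d ++ d)
    (hl : l.length ≤ d.length) : ∃ a b, d = a ++ b ∧ l <+: b ++ a := by
  obtain ⟨s, t, hst⟩ := h
  have hdrop : l ++ t = (d ++ d).drop s.length := by
    rw [← hst]
    simp [List.drop_left, List.drop_append]
  by_cases hs : s.length ≤ d.length
  · refine ⟨d.take s.length, d.drop s.length, (List.take_append_drop _ d).symm, ?_⟩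
    have h2 : (d ++ d).drop s.length = (d.drop s.length ++ d.take s.length) ++ d.drop s.length := by
      rw [List.drop_append_of_le_length hs]
      conv_lhs => rw [← List.take_append_drop s.length d]
      simp [List.append_assoc]
    have h3 : l <+: (d.drop s.length ++ d.take s.length) ++ d.drop s.length := by
      rw [← h2, ← hdrop]; exact ⟨t, rfl⟩
    rw [List.prefix_iff_eq_take] at h3 ⊢
    rwa [List.take_append_of_le_length
      (show l.length ≤ (d.drop s.length ++ d.take s.length).length by simp; omega)] at h3
  · push_neg at hs
    set j := s.length - d.length with hj
    have hsj : s.length = d.length + j := by omega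
    refine ⟨d.take j, d.drop j, (List.take_append_drop _ d).symm, ?_⟩
    have h2 : (d ++ d).drop s.length = d.drop j := by
      rw [hsj, List.drop_append, List.drop_eq_nil_of_le (by omega)]
      simp
    have h3 : l <+: d.drop j := by rw [← h2, ← hdrop]; exact ⟨t, rfl⟩
    exact h3.trans (List.prefix_append _ _)

end Aux

/-- The list of darts of a walk is non-backtracking: no dart is immediately
followed by its reverse. -/
def SimpleGraph.Walk.NonBacktracking {V : Type*} {G : SimpleGraph V} {u v : V}
    (w : G.Walk u v) : Prop :=
  w.darts.Chain' (fun d₁ d₂ => d₂ ≠ d₁.symm)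

/-- A closed geodesic: a nonempty closed walk that is non-backtracking, including
at the basepoint (the first dart is not the reverse of the last dart). -/
def SimpleGraph.Walk.IsClosedGeodesic {V : Type*} {G : SimpleGraph V} {v : V}
    (w : G.Walk v v) : Prop :=
  w.darts ≠ [] ∧ w.darts.Chain' (fun d₁ d₂ => d₂ ≠ d₁.symm) ∧
    ∀ df ∈ w.darts.head?, ∀ dl ∈ w.darts.getLast?, df ≠ dl.symm

/-- If two closed geodesics of length `g` in a graph of girth `g` share a common
(cyclic) subwalk of length `⌊g/2⌋ + 1`, then they coincide up to cyclic
permutation of their edge sequences. -/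
theorem closed_geodesics_sharing_long_subwalk_coincide
    {V : Type*} (G : SimpleGraph V) (g : ℕ) (hg : G.girth = g)
    {u v : V} (w₁ : G.Walk u u) (w₂ : G.Walk v v)
    (h₁ : w₁.IsClosedGeodesic) (h₂ : w₂.IsClosedGeodesic)
    (hl₁ : w₁.length = g) (hl₂ : w₂.length = g)
    (l : List G.Dart) (hlen : l.length = g / 2 + 1)
    (hinf₁ : l <:+: w₁.darts ++ w₁.darts) (hinf₂ : l <:+: w₂.darts ++ w₂.darts) :
    w₁.darts ~r w₂.darts := by
  classical
  obtain ⟨hne₁, hchain₁, hbase₁⟩ := h₁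
  obtain ⟨hne₂, hchain₂, hbase₂⟩ := h₂
  have hlen₁ : w₁.darts.length = g := by rw [SimpleGraph.Walk.length_darts, hl₁]
  have hlen₂ : w₂.darts.length = g := by rw [SimpleGraph.Walk.length_darts, hl₂]
  have hg1 : 1 ≤ g := by
    have := List.length_pos_iff.mpr hne₁
    omega
  obtain ⟨a₁, b₁, hd₁, hp₁⟩ := prefix_rotation_of_infix hinf₁ (by omega)
  obtain ⟨a₂, b₂, hd₂, hp₂⟩ := prefix_rotation_of_infix hinf₂ (by omega)
  obtain ⟨t₁, ht₁⟩ := hp₁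
  obtain ⟨t₂, ht₂⟩ := hp₂
  -- doubled chains
  have hdc1 : (w₁.darts ++ w₁.darts).Chain' (fun d₁ d₂ => d₂ ≠ d₁.symm) :=
    List.isChain_append.mpr ⟨hchain₁, hchain₁, fun dl hdl df hdf => hbase₁ df hdf dl hdl⟩
  have hdc2 : (w₂.darts ++ w₂.darts).Chain' (fun d₁ d₂ => d₂ ≠ d₁.symm) :=
    List.isChain_append.mpr ⟨hchain₂, hchain₂, fun dl hdl df hdf => hbase₂ df hdf dl hdl⟩
  have hchr₁ : (b₁ ++ a₁).Chain' (fun d₁ d₂ => d₂ ≠ d₁.symm) :=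
    hdc1.infix ⟨a₁, b₁, by rw [hd₁]; simp [List.append_assoc]⟩
  have hchr₂ : (b₂ ++ a₂).Chain' (fun d₁ d₂ => d₂ ≠ d₁.symm) :=
    hdc2.infix ⟨a₂, b₂, by rw [hd₂]; simp [List.append_assoc]⟩
  -- dart chain conditions on rotations
  obtain ⟨m₁, hma₁, hmb₁⟩ := dartChain_split (hd₁ ▸ dartChain_darts w₁)
  obtain ⟨m₂, hma₂, hmb₂⟩ := dartChain_split (hd₂ ▸ dartChain_darts w₂)
  have hrc₁ : DartChain m₁ m₁ (l ++ t₁) := ht₁ ▸ dartChain_join hmb₁ hma₁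
  have hrc₂ : DartChain m₂ m₂ (l ++ t₂) := ht₂ ▸ dartChain_join hmb₂ hma₂
  -- l is nonempty, so the two basepoints agree
  obtain ⟨d0, l', rfl⟩ : ∃ d0 l', l = d0 :: l' := by
    cases l with
    | nil => simp at hlen
    | cons d0 l' => exact ⟨d0, l', rfl⟩
  have hm12 : m₁ = m₂ := by
    have e1 := (dartChain_cons_iff.mp (by simpa using hrc₁)).1
    have e2 := (dartChain_cons_iff.mp (by simpa using hrc₂)).1
    rw [← e1, ← e2]
  subst hm12
  -- split off the common prefix
  obtain ⟨y₁, hy₁, hyt₁⟩ := dartChain_split hrc₁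
  obtain ⟨y₂, hy₂, hyt₂⟩ := dartChain_split hrc₂
  have hyy : y₁ = y₂ := dartChain_y_unique hy₁ hy₂
  subst hyy
  -- lengths
  have hlt₁ : (d0 :: l').length + t₁.length = g := by
    have := congrArg List.length ht₁
    simp only [List.length_append] at this
    have h2 := congrArg List.length hd₁
    simp only [List.length_append] at h2
    omega
  have hlt₂ : (d0 :: l').length + t₂.length = g := by
    have := congrArg List.length ht₂
    simp only [List.length_append] at this
    have h2 := congrArg List.length hd₂
    simp only [List.length_append] at h2
    omega
  -- chains on the tails
  have hct₁ : t₁.Chain' (fun d₁ d₂ => d₂ ≠ d₁.symm) := hchr₁.suffix ⟨_, ht₁⟩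
  have hct₂ : t₂.Chain' (fun d₁ d₂ => d₂ ≠ d₁.symm) := hchr₂.suffix ⟨_, ht₂⟩
  -- the two tails coincide
  have htt : t₁ = t₂ := by
    have key := darts_eq_of_nonbacktracking_short hg
      ((buildWalk t₁ y₁ m₁ hyt₁).length + (buildWalk t₂ y₁ m₁ hyt₂).length)
      (buildWalk t₁ y₁ m₁ hyt₁) (buildWalk t₂ y₁ m₁ hyt₂)
      (by rw [darts_buildWalk]; exact hct₁)
      (by rw [darts_buildWalk]; exact hct₂)
      le_rfl
      (by
        rw [← SimpleGraph.Walk.length_darts, ← SimpleGraph.Walk.length_darts,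
          darts_buildWalk, darts_buildWalk]
        simp only [List.length_cons] at hlt₁ hlt₂ hlen
        omega)
    rwa [darts_buildWalk, darts_buildWalk] at key
  -- conclude
  rw [hd₁, hd₂]
  refine (List.isRotated_append).trans ?_
  rw [← ht₁, htt, ht₂]
  exact List.isRotated_append
end

section
/- If G is a connected graph of maximal degree d and girth g on n vertices, then the number of distinct shortest oriented cycles of G is at most n·d·(d-1)^⌊g/2⌋ / g. -/
open SimpleGraph

section Aux

open Walk

variable {V : Type*} {G : SimpleGraph V}
lemma drop_nil' {u : V} (n : ℕ) : (Walk.nil : G.Walk u u).drop n = .nil := by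
  cases n <;> rfl

lemma drop_cons_succ' {u a v : V} (h : G.Adj u a) (q : G.Walk a v) (n : ℕ) :
    (Walk.cons h q).drop (n+1) = (q.drop n).copy (Walk.getVert_cons_succ _ h).symm rfl := rfl

lemma length_drop' {u v : V} (p : G.Walk u v) (n : ℕ) :
    (p.drop n).length = p.length - n := by
  induction p generalizing n with
  | nil => rw [drop_nil']; simp
  | cons h q ih =>
    cases n with
    | zero => simp [Walk.drop]
    | succ n => rw [drop_cons_succ']; simpa using ih n

lemma getVert_drop' {u v : V} (p : G.Walk u v) (n i : ℕ) :
    (p.drop n).getVert i = p.getVert (n + i) := by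
  induction p generalizing n with
  | nil => rw [drop_nil']; simp [Walk.getVert_of_length_le]
  | cons h q ih =>
    cases n with
    | zero => simp [Walk.drop]
    | succ n =>
      rw [drop_cons_succ', Walk.getVert_copy]
      have h2 : n + 1 + i = (n + i) + 1 := by omega
      rw [h2, Walk.getVert_cons_succ]
      exact ih n

lemma support_drop' {u v : V} (p : G.Walk u v) (n : ℕ) (hn : n ≤ p.length) :
    (p.drop n).support = p.support.drop n := by
  induction p generalizing n with
  | nil =>
    obtain rfl : n = 0 := by simpa using hn
    rfl
  | cons h q ih =>
    cases n with
    | zero => simp [Walk.drop]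
    | succ n =>
      simp only [Walk.length_cons] at hn
      rw [drop_cons_succ']
      simp only [Walk.support_copy, Walk.support_cons, List.drop_succ_cons]
      exact ih n (by omega)

lemma support_getElem_eq {u v : V} (p : G.Walk u v) {i : ℕ} (hi : i < p.support.length) :
    p.support[i] = p.getVert i := by
  induction p generalizing i with
  | nil =>
    obtain rfl : i = 0 := by simpa using hi
    simp
  | cons h q ih =>
    cases i with
    | zero => simp
    | succ i =>
      simp only [Walk.support_cons, List.getElem_cons_succ, Walk.getVert_cons_succ]
      exact ih (by simpa [Walk.length_support] using hi)
lemma walk_ext' : ∀ (n : ℕ) {u v : V} (p q : G.Walk u v), p.length ≤ n →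
    p.length = q.length → (∀ i, p.getVert i = q.getVert i) → p = q := by
  intro n
  induction n with
  | zero =>
    intro u v p q hn hl hgv
    cases p with
    | nil =>
      cases q with
      | nil => rfl
      | cons h2 q' => simp at hl
    | cons h p' => simp at hn
  | succ n ih =>
    intro u v p q hn hl hgv
    cases p with
    | nil =>
      cases q with
      | nil => rfl
      | cons h2 q' => simp at hl
    | cons h p' =>
      cases q with
      | nil => simp at hl
      | cons h2 q' =>
        have hab : _ = _ := hgv 1
        rw [Walk.getVert_cons_succ, Walk.getVert_cons_succ, Walk.getVert_zero,
          Walk.getVert_zero] at hab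
        subst hab
        have : p' = q' := by
          refine ih p' q' ?_ ?_ (fun i => hgv (i+1))
          · simpa using hn
          · simpa using hl
        subst this
        rfl

lemma two_paths' : ∀ (n : ℕ) {u v : V} (p q : G.Walk u v), p.length ≤ n →
    p.IsPath → q.IsPath → p ≠ q →
    ∃ (x : V) (c : G.Walk x x), c.IsCycle ∧ c.length ≤ p.length + q.length := by
  intro n
  induction n with
  | zero =>
    intro u v p q hn hp hq hne
    cases p with
    | nil =>
      have : q = Walk.nil := Subtype.ext_iff.mp (SimpleGraph.Path.loop_eq ⟨q, hq⟩)
      exact absurd this.symm hne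
    | cons h p' => simp at hn
  | succ n ih =>
    intro u v p q hn hp hq hne
    classical
    cases p with
    | nil =>
      have : q = Walk.nil := Subtype.ext_iff.mp (SimpleGraph.Path.loop_eq ⟨q, hq⟩)
      exact absurd this.symm hne
    | cons h p' =>
      cases q with
      | nil =>
        have : Walk.cons h p' = Walk.nil :=
          Subtype.ext_iff.mp (SimpleGraph.Path.loop_eq ⟨Walk.cons h p', hp⟩)
        simp at this
      | cons h2 q' =>
        rename_i a b
        by_cases hab : a = b
        · subst hab
          have hne' : p' ≠ q' := fun he => hne (by rw [he])
          obtain ⟨x, c, hc, hlc⟩ := ih p' q' (by simpa using hn) hp.of_cons hq.of_cons hne'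
          refine ⟨x, c, hc, ?_⟩
          simp only [Walk.length_cons]
          omega
        · set w := p'.append (Walk.cons h2 q').reverse with hw
          have hbp : w.bypass.IsPath := Walk.bypass_isPath w
          have hedge : s(u, a) ∉ w.bypass.edges := by
            intro hmem
            have hmem' := Walk.edges_bypass_subset w hmem
            rw [hw, Walk.edges_append, Walk.edges_reverse, List.mem_append,
              List.mem_reverse] at hmem'
            rcases hmem' with hh | hh
            · exact ((Walk.cons_isPath_iff h p').mp hp).2
                (Walk.fst_mem_support_of_mem_edges p' hh)
            · rw [Walk.edges_cons, List.mem_cons] at hh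
              rcases hh with hh | hh
              · rcases Sym2.eq_iff.mp hh with ⟨-, h1⟩ | ⟨h1, h2⟩
                · exact hab h1
                · exact h.ne' h2
              · exact ((Walk.cons_isPath_iff h2 q').mp hq).2
                  (Walk.fst_mem_support_of_mem_edges q' hh)
          refine ⟨u, Walk.cons h w.bypass,
            (Walk.cons_isCycle_iff w.bypass h).mpr ⟨hbp, hedge⟩, ?_⟩
          have hlb := Walk.length_bypass_le w
          have hwl : w.length = p'.length + (q'.length + 1) := by
            simp [hw]
          simp only [Walk.length_cons]
          omega

lemma girth_le_cycle {x : V} {c : G.Walk x x} (hc : c.IsCycle) : G.girth ≤ c.length := by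
  have h1 : G.egirth ≤ (c.length : ℕ∞) := by
    refine iInf_le_of_le x ?_
    refine iInf_le_of_le c ?_
    exact iInf_le_of_le hc le_rfl
  have := ENat.toNat_le_toNat h1 (by simp)
  simpa [SimpleGraph.girth] using this
lemma getVert_injOn' {v : V} {w : G.Walk v v} (hc : w.IsCycle) {i j : ℕ}
    (hi : i ≤ w.length - 1) (hj : j ≤ w.length - 1) (hij : w.getVert i = w.getVert j) :
    i = j := by
  have h3 := hc.three_le_length
  have hnd := hc.support_nodup
  have htl : w.support.length = w.length + 1 := Walk.length_support w
  have hts : w.support = v :: w.support.tail := Walk.support_eq_cons w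
  have httl : w.support.tail.length = w.length := by
    rw [List.length_tail, htl]; omega
  have key : ∀ {a b : ℕ}, 1 ≤ a → a ≤ w.length → 1 ≤ b → b ≤ w.length →
      w.getVert a = w.getVert b → a = b := by
    intro a b ha1 haL hb1 hbL hab
    obtain ⟨a', rfl⟩ : ∃ a', a = a' + 1 := ⟨a - 1, by omega⟩
    obtain ⟨b', rfl⟩ : ∃ b', b = b' + 1 := ⟨b - 1, by omega⟩
    have gA : w.support.tail[a']'(by omega) = w.getVert (a' + 1) := by
      rw [List.getElem_tail]
      exact support_getElem_eq w (by omega)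
    have gB : w.support.tail[b']'(by omega) = w.getVert (b' + 1) := by
      rw [List.getElem_tail]
      exact support_getElem_eq w (by omega)
    have : a' = b' := by
      rw [← List.Nodup.getElem_inj_iff hnd (hi := by omega) (hj := by omega)]
      rw [gA, gB]
      exact hab
    omega
  rcases Nat.eq_zero_or_pos i with rfl | hipos
  · rcases Nat.eq_zero_or_pos j with rfl | hjpos
    · rfl
    · exfalso
      have : w.getVert w.length = w.getVert j := by
        rw [Walk.getVert_length, ← hij, Walk.getVert_zero]
      have := key (by omega) le_rfl hjpos (by omega) this
      omega
  · rcases Nat.eq_zero_or_pos j with rfl | hjpos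
    · exfalso
      have : w.getVert i = w.getVert w.length := by
        rw [Walk.getVert_length, hij, Walk.getVert_zero]
      have := key hipos (by omega) (by omega) le_rfl this
      omega
    · exact key hipos (by omega) hjpos (by omega) hij

lemma drop_isPath' {v : V} {w : G.Walk v v} (hc : w.IsCycle) {n : ℕ} (hn1 : 1 ≤ n)
    (hn2 : n ≤ w.length) : (w.drop n).IsPath := by
  rw [Walk.isPath_def, support_drop' w n hn2]
  obtain ⟨m, rfl⟩ : ∃ m, n = m + 1 := ⟨n - 1, by omega⟩
  rw [Walk.support_eq_cons w, List.drop_succ_cons]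
  exact List.Nodup.sublist (List.drop_sublist m _) hc.support_nodup

lemma cycle_eq' {g : ℕ} (hgirth : G.girth = g) (hg3 : 3 ≤ g) {v : V} {w1 w2 : G.Walk v v}
    (h1 : w1.IsCycle) (h2 : w2.IsCycle) (l1 : w1.length = g) (l2 : w2.length = g)
    (hag : ∀ i ≤ g / 2 + 1, w1.getVert i = w2.getVert i) : w1 = w2 := by
  by_contra hne
  set k := g / 2 + 1 with hk
  have hkg : k ≤ g := by omega
  have hu : w2.getVert k = w1.getVert k := (hag k le_rfl).symm
  set p1 := w1.drop k with hp1def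
  set p2 := (w2.drop k).copy (by rw [hu]) rfl with hp2def
  have hp1 : p1.IsPath := drop_isPath' h1 (by omega) (by omega)
  have hp2 : p2.IsPath := by
    rw [hp2def, Walk.isPath_copy]
    exact drop_isPath' h2 (by omega) (by omega)
  have hl1 : p1.length = g - k := by rw [hp1def, length_drop', l1]
  have hl2 : p2.length = g - k := by rw [hp2def, Walk.length_copy, length_drop', l2]
  have hne' : p1 ≠ p2 := by
    intro he
    apply hne
    refine walk_ext' w1.length w1 w2 le_rfl (by omega) ?_
    intro i
    rcases le_or_gt i k with hik | hik
    · exact hag i hik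
    · have hgv : p1.getVert (i - k) = p2.getVert (i - k) := by rw [he]
      rw [hp1def, getVert_drop'] at hgv
      rw [hp2def, Walk.getVert_copy, getVert_drop'] at hgv
      have : k + (i - k) = i := by omega
      rwa [this] at hgv
  obtain ⟨x, c, hc, hlen⟩ := two_paths' p1.length p1 p2 le_rfl hp1 hp2 hne'
  have hgl : G.girth ≤ c.length := girth_le_cycle hc
  rw [hgirth] at hgl
  omega
section Counting

variable [Fintype V] [DecidableEq V] [DecidableRel G.Adj]

def pathFun (G : SimpleGraph V) [DecidableRel G.Adj] (m : ℕ) : Finset (Fin (m+1) → V) :=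
  Finset.univ.filter fun f =>
    (∀ i : Fin m, G.Adj (f i.castSucc) (f i.succ)) ∧ Function.Injective f

lemma mem_pathFun {m : ℕ} {f : Fin (m+1) → V} :
    f ∈ pathFun G m ↔ (∀ i : Fin m, G.Adj (f i.castSucc) (f i.succ)) ∧ Function.Injective f := by
  simp [pathFun]

lemma card_pathFun_step (m : ℕ) :
    (pathFun G (m+2)).card ≤ (G.maxDegree - 1) * (pathFun G (m+1)).card := by
  have himg : ∀ f ∈ pathFun G (m+2), Fin.init f ∈ pathFun G (m+1) := by
    intro f hf
    rw [mem_pathFun] at hf ⊢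
    obtain ⟨ha, hinj⟩ := hf
    refine ⟨fun i => ?_, fun x y hxy => ?_⟩
    · have := ha i.castSucc
      simpa only [Fin.init_def, Fin.succ_castSucc] using this
    · have : f x.castSucc = f y.castSucc := hxy
      exact Fin.castSucc_injective _ (hinj this)
  calc (pathFun G (m+2)).card
      ≤ (G.maxDegree - 1) * ((pathFun G (m+2)).image Fin.init).card := by
        refine Finset.card_le_mul_card_image _ _ ?_
        intro a ha
        obtain ⟨f0, hf0, rfl⟩ := Finset.mem_image.mp ha
        have haP : Fin.init f0 ∈ pathFun G (m+1) := himg f0 hf0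
        rw [mem_pathFun] at haP
        refine Finset.card_le_card_of_injOn (fun f => f (Fin.last (m+2)))
          (t := (G.neighborFinset (Fin.init f0 (Fin.last (m+1)))).erase
            (Fin.init f0 ((Fin.last m).castSucc))) ?_ ?_ |>.trans ?_
        · intro f hf
          rw [Finset.mem_coe, Finset.mem_filter] at hf
          obtain ⟨hfP, hfi⟩ := hf
          rw [mem_pathFun] at hfP
          obtain ⟨hadj, hinj⟩ := hfP
          rw [Finset.mem_coe, Finset.mem_erase, mem_neighborFinset]
          constructor
          · intro habs
            rw [← hfi] at habs
            have := hinj habs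
            have := congrArg Fin.val this
            simp [Fin.last] at this
          · have := hadj (Fin.last (m+1))
            rw [Fin.succ_last] at this
            rw [← hfi]
            exact this
        · intro f hf g hg hfg
          rw [Finset.mem_coe, Finset.mem_filter] at hf hg
          have : Fin.snoc (Fin.init f) (f (Fin.last (m+2))) =
              Fin.snoc (Fin.init g) (g (Fin.last (m+2))) := by
            rw [hf.2, hg.2]
            exact congrArg _ hfg
          rwa [Fin.snoc_init_self, Fin.snoc_init_self] at this
        · have hmem : Fin.init f0 ((Fin.last m).castSucc) ∈
              G.neighborFinset (Fin.init f0 (Fin.last (m+1))) := by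
            rw [mem_neighborFinset]
            have := haP.1 (Fin.last m)
            rw [Fin.succ_last] at this
            exact this.symm
          rw [Finset.card_erase_of_mem hmem, card_neighborFinset_eq_degree]
          exact Nat.sub_le_sub_right (G.degree_le_maxDegree _) 1
    _ ≤ (G.maxDegree - 1) * (pathFun G (m+1)).card := by
        refine Nat.mul_le_mul_left _ (Finset.card_le_card ?_)
        intro a ha
        obtain ⟨f0, hf0, rfl⟩ := Finset.mem_image.mp ha
        exact himg f0 hf0

lemma card_pathFun_base :
    (pathFun G 1).card ≤ Fintype.card V * G.maxDegree := by
  calc (pathFun G 1).card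
      ≤ (Finset.univ.sigma fun v : V => G.neighborFinset v).card := by
        refine Finset.card_le_card_of_injOn (fun f => ⟨f 0, f 1⟩) ?_ ?_
        · intro f hf
          rw [Finset.mem_coe, mem_pathFun] at hf
          rw [Finset.mem_coe, Finset.mem_sigma, mem_neighborFinset]
          exact ⟨Finset.mem_univ _, by simpa using hf.1 0⟩
        · intro f hf g hg h
          have h1 : f 0 = g 0 := congrArg Sigma.fst h
          have h2 : f 1 = g 1 := congrArg (fun s : (_ : V) × V => s.2) h
          funext i
          fin_cases i
          · exact h1
          · exact h2
    _ ≤ Fintype.card V * G.maxDegree := by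
        rw [Finset.card_sigma]
        have := Finset.sum_le_card_nsmul Finset.univ
          (fun v : V => (G.neighborFinset v).card) G.maxDegree
          (fun v _ => by
            show (G.neighborFinset v).card ≤ G.maxDegree
            rw [card_neighborFinset_eq_degree]
            exact G.degree_le_maxDegree v)
        simpa [mul_comm] using this

lemma card_pathFun_le (m : ℕ) :
    (pathFun G (m+1)).card ≤ Fintype.card V * G.maxDegree * (G.maxDegree - 1) ^ m := by
  induction m with
  | zero => simpa using card_pathFun_base
  | succ k ih =>
    calc (pathFun G (k+2)).card ≤ (G.maxDegree - 1) * (pathFun G (k+1)).card :=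
          card_pathFun_step k
      _ ≤ (G.maxDegree - 1) * (Fintype.card V * G.maxDegree * (G.maxDegree - 1) ^ k) :=
          Nat.mul_le_mul_left _ ih
      _ = Fintype.card V * G.maxDegree * (G.maxDegree - 1) ^ (k+1) := by ring

end Counting
lemma rooted_le' {g : ℕ} [Fintype V] [DecidableEq V] [DecidableRel G.Adj]
    (hgirth : G.girth = g) (hg3 : 3 ≤ g) :
    {p : (v : V) × G.Walk v v | p.2.IsCycle ∧ p.2.length = g}.ncard ≤
      (pathFun G (g/2+1)).card := by
  rw [← Set.ncard_coe_finset]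
  refine Set.ncard_le_ncard_of_injOn
    (fun p => fun i : Fin (g/2+2) => p.2.getVert i.val) ?_ ?_ (Finset.finite_toSet _)
  · rintro ⟨v, w⟩ ⟨hc, hl⟩
    rw [Finset.mem_coe, mem_pathFun]
    constructor
    · intro i
      simp only [Fin.coe_castSucc, Fin.val_succ]
      apply Walk.adj_getVert_succ
      rw [hl]
      have := i.isLt
      omega
    · intro x y hxy
      have hx : (x:ℕ) ≤ w.length - 1 := by rw [hl]; have := x.isLt; omega
      have hy : (y:ℕ) ≤ w.length - 1 := by rw [hl]; have := y.isLt; omega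
      exact Fin.ext (getVert_injOn' hc hx hy hxy)
  · intro p hp q hq heq
    obtain ⟨v1, w1⟩ := p
    obtain ⟨v2, w2⟩ := q
    obtain ⟨hc1, hl1⟩ := hp
    obtain ⟨hc2, hl2⟩ := hq
    have h0 : v1 = v2 := by
      have := congrFun heq (0 : Fin (g/2+2))
      simpa using this
    subst h0
    have hag : ∀ i ≤ g/2 + 1, w1.getVert i = w2.getVert i := by
      intro i hi
      have := congrFun heq ⟨i, by omega⟩
      simpa using this
    exact congrArg (Sigma.mk v1) (cycle_eq' hgirth hg3 hc1 hc2 hl1 hl2 hag)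
end Aux


/-- The number of shortest oriented cycles equipped with a starting point:
pairs `(v, w)` where `w` is an (oriented) cycle of length `g` based at `v`. -/
noncomputable def rootedShortestCycles {V : Type*} (G : SimpleGraph V) (g : ℕ) : ℕ :=
  {p : (v : V) × G.Walk v v | p.2.IsCycle ∧ p.2.length = g}.ncard

/-- The kissing number: the number of shortest oriented cycles, counted up to
cyclic permutation of their edges (each such cycle of length `g` has exactly `g`
rooted representatives). -/
noncomputable def kissingNumber {V : Type*} (G : SimpleGraph V) (g : ℕ) : ℕ :=
  rootedShortestCycles G g / g

/-- If `G` is a connected graph of maximal degree `d` and girth `g` on `n`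
vertices, then `kiss(G) ≤ n d (d-1)^⌊g/2⌋ / g`. -/
theorem kissing_number_le {V : Type*} [Fintype V] (G : SimpleGraph V)
    [DecidableRel G.Adj] (n d g : ℕ) (hconn : G.Connected)
    (hd : G.maxDegree = d) (hg : G.girth = g) (hn : Fintype.card V = n) :
    (kissingNumber G g : ℝ) ≤ n * d * ((d : ℝ) - 1) ^ (g / 2) / g := by
  classical
  rcases Nat.eq_zero_or_pos g with rfl | hgpos
  · rw [kissingNumber, Nat.div_zero]
    norm_num
  · have hnac : ¬ G.IsAcyclic := by
      rw [← girth_eq_zero, hg]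
      omega
    have hg3 : 3 ≤ g := hg ▸ three_le_girth hnac
    rcases Nat.eq_zero_or_pos d with rfl | hdpos
    · have hempty : {p : (v : V) × G.Walk v v | p.2.IsCycle ∧ p.2.length = g} = ∅ := by
        ext p
        simp only [Set.mem_setOf_eq, Set.mem_empty_iff_false, iff_false, not_and]
        intro hc
        exfalso
        have hadj : G.Adj p.1 (p.2.getVert 1) := Walk.adj_snd hc.not_nil
        have hdeg : 0 < G.degree p.1 := (G.degree_pos_iff_exists_adj p.1).mpr ⟨_, hadj⟩
        have := G.degree_le_maxDegree p.1
        omega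
      have hz : kissingNumber G g = 0 := by
        rw [kissingNumber, rootedShortestCycles, hempty]
        simp
      rw [hz]
      norm_num
    · have hrooted : rootedShortestCycles G g ≤ Fintype.card V * d * (d-1)^(g/2) := by
        rw [rootedShortestCycles]
        refine (rooted_le' hg hg3).trans ?_
        have := card_pathFun_le (G := G) (g/2)
        rwa [hd] at this
      have hg0 : (0:ℝ) < g := by exact_mod_cast hgpos
      have hcast : ((Fintype.card V * d * (d-1)^(g/2) : ℕ) : ℝ) =
          n * d * ((d : ℝ) - 1) ^ (g / 2) := by
        have h1d : (1:ℕ) ≤ d := hdpos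
        rw [Nat.cast_mul, Nat.cast_mul, Nat.cast_pow, Nat.cast_sub h1d, Nat.cast_one, hn]
      rw [kissingNumber]
      calc ((rootedShortestCycles G g / g : ℕ) : ℝ)
          ≤ (rootedShortestCycles G g : ℝ) / g := Nat.cast_div_le
        _ ≤ (n * d * ((d : ℝ) - 1) ^ (g / 2)) / g := by
            rw [div_le_div_iff_of_pos_right hg0, ← hcast]
            exact_mod_cast hrooted
end

section
/- A connected d-regular graph (d ≥ 3) of girth g in which every non-backtracking walk of length ⌊g/2⌋ + 1 extends to a closed geodesic of length g is a Moore graph, i.e., it attains the Moore bound: n = 1 + d·∑_{j=0}^{(g-3)/2}(d-1)^j if g is odd, and n = 2·∑_{j=0}^{(g-2)/2}(d-1)^j if g is even. -/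
set_option linter.unusedSectionVars false
set_option maxHeartbeats 1000000


open SimpleGraph List Finset

/-- A walk is contained in a closed geodesic of length `g` if its dart sequence
is a (cyclic) subwalk of that of some closed geodesic of length `g`. -/
def ContainedInClosedGeodesic {V : Type*} (G : SimpleGraph V) {a b : V}
    (w : G.Walk a b) (g : ℕ) : Prop :=
  ∃ (v : V) (c : G.Walk v v), c.IsClosedGeodesic ∧ c.length = g ∧
    w.darts <:+: c.darts ++ c.darts


namespace Aux

variable {V : Type*} {G : SimpleGraph V} [DecidableEq V]

lemma darts_head?_fst {u v : V} (p : G.Walk u v) : ∀ d ∈ p.darts.head?, d.fst = u := by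
  cases p with
  | nil => simp
  | cons h' p' => intro d hd; simp [Option.mem_def] at hd; subst hd; rfl

lemma darts_getLast?_snd {u v : V} (p : G.Walk u v) : ∀ d ∈ p.darts.getLast?, d.snd = v := by
  induction p with
  | nil => simp
  | cons h' p' ih =>
    cases p' with
    | nil => intro d hd; simp [Option.mem_def] at hd; subst hd; rfl
    | cons h'' p'' =>
      intro d hd
      rw [SimpleGraph.Walk.darts_cons, SimpleGraph.Walk.darts_cons, List.getLast?_cons_cons] at hd
      exact ih d (by rw [SimpleGraph.Walk.darts_cons]; exact hd)

lemma chain_boundary {u v : V} (p : G.Walk u v) {l₁ l₂ : List G.Dart}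
    (h : p.darts = l₁ ++ l₂) :
    ∀ d₁ ∈ l₁.getLast?, ∀ d₂ ∈ l₂.head?, d₁.snd = d₂.fst := by
  have hc := p.isChain_dartAdj_darts
  rw [h, List.isChain_append] at hc
  exact hc.2.2

/-- distance between the endpoints of a middle dart-segment of a walk. -/
lemma dist_seg (hconn : G.Connected) {x y : V} (p : G.Walk x y) :
    ∀ (s m t : List G.Dart), p.darts = s ++ (m ++ t) →
    ∀ df ∈ m.head?, ∀ dl ∈ m.getLast?, G.dist df.fst dl.snd ≤ m.length := by
  induction p with
  | nil =>
    intro s m t h df hdf dl hdl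
    simp only [SimpleGraph.Walk.darts_nil] at h
    obtain ⟨-, hm, -⟩ := by simpa [List.append_eq_nil_iff] using h.symm
    subst hm; simp at hdf
  | cons ha p' ih =>
    intro s m t h df hdf dl hdl
    rw [SimpleGraph.Walk.darts_cons] at h
    cases s with
    | cons e s' =>
      have h2 : p'.darts = s' ++ (m ++ t) := by simpa using congrArg List.tail h
      exact ih s' m t h2 df hdf dl hdl
    | nil =>
      cases m with
      | nil => simp at hdf
      | cons d m' =>
        simp only [List.nil_append, List.cons_append] at h
        have h1 : (⟨(_, _), ha⟩ : G.Dart) = d := by simpa using congrArg List.head? h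
        have h2 : p'.darts = m' ++ t := by simpa using congrArg List.tail h
        have hdf' : d = df := by simpa [Option.mem_def] using hdf
        subst hdf'
        by_cases hm0 : m' = []
        · subst hm0
          have heq : d = dl := by simpa [Option.mem_def] using hdl
          subst heq
          have : G.dist d.fst d.snd ≤ 1 := by
            simpa using SimpleGraph.dist_le (d.adj.toWalk)
          simpa using this
        · obtain ⟨d', m'', rfl⟩ := List.exists_cons_of_ne_nil hm0
          have hdl' : dl ∈ (d' :: m'').getLast? := by
            rwa [List.getLast?_cons_cons] at hdl
          have ihm := ih [] (d' :: m'') t (by simpa using h2) d' rfl dl hdl'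
          have hfst := darts_head?_fst p' d' (by rw [h2]; rfl)
          calc G.dist d.fst dl.snd
              ≤ G.dist d.fst d'.fst + G.dist d'.fst dl.snd := hconn.dist_triangle
            _ ≤ 1 + (d' :: m'').length := by
                refine Nat.add_le_add ?_ ihm
                rw [hfst, ← h1]
                simpa using SimpleGraph.dist_le (ha.toWalk)
            _ ≤ (d :: d' :: m'').length := by simp [Nat.add_comm]


lemma nb_tail {u w v : V} {ha : G.Adj u w} {p : G.Walk w v}
    (h : (SimpleGraph.Walk.cons ha p).NonBacktracking) : p.NonBacktracking := by
  unfold SimpleGraph.Walk.NonBacktracking at *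
  rw [SimpleGraph.Walk.darts_cons, List.Chain', List.isChain_cons] at h
  exact h.2

lemma nb_reverse {u v : V} {p : G.Walk u v} (h : p.NonBacktracking) :
    p.reverse.NonBacktracking := by
  unfold SimpleGraph.Walk.NonBacktracking at *
  rw [SimpleGraph.Walk.darts_reverse, List.Chain', List.isChain_reverse, List.isChain_map]
  exact h.imp fun {a b} hab hc => hab (by
    rw [SimpleGraph.Dart.symm_symm] at hc; exact hc.symm)

lemma isPath_nb {u v : V} {p : G.Walk u v} (h : p.IsPath) : p.NonBacktracking := by
  induction p with
  | nil => exact List.isChain_nil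
  | cons ha p' ih =>
    rw [SimpleGraph.Walk.cons_isPath_iff] at h
    unfold SimpleGraph.Walk.NonBacktracking
    rw [SimpleGraph.Walk.darts_cons, List.Chain', List.isChain_cons]
    refine ⟨fun b hb hbe => ?_, ih h.1⟩
    have hmem : b ∈ p'.darts := List.mem_of_mem_head? hb
    have := p'.dart_snd_mem_support_of_mem_darts hmem
    rw [hbe] at this
    exact h.2 this

lemma closed_not_path {u : V} {w : G.Walk u u} (h : w.darts ≠ []) : ¬ w.IsPath := by
  cases w with
  | nil => simp at h
  | cons ha p =>
    rw [SimpleGraph.Walk.cons_isPath_iff]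
    rintro ⟨-, hu⟩
    exact hu p.end_mem_support

lemma girth_le_cycle {a : V} {w : G.Walk a a} (hc : w.IsCycle) : G.girth ≤ w.length := by
  have h1 : G.egirth ≤ (w.length : ℕ∞) :=
    iInf_le_of_le a (iInf_le_of_le w (iInf_le _ hc))
  have h2 := ENat.toNat_le_toNat h1 (by simp)
  simpa [SimpleGraph.girth] using h2

lemma first_dart_of_end_edge {w u : V} (q : G.Walk w u) (hq : q.IsPath) (hne : u ≠ w)
    (he : s(u, w) ∈ q.edges) : ∃ d ∈ q.darts.head?, d.snd = u := by
  cases q with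
  | nil => simp at he
  | cons ha' q' =>
    rw [SimpleGraph.Walk.edges_cons, List.mem_cons] at he
    rcases he with he | he
    · rw [Sym2.eq_iff] at he
      rcases he with ⟨h1, h2⟩ | ⟨h1, h2⟩
      · exact absurd h1 hne
      · exact ⟨_, rfl, h1.symm⟩
    · exfalso
      rw [SimpleGraph.Walk.cons_isPath_iff] at hq
      exact hq.2 (q'.snd_mem_support_of_mem_edges he)

lemma isPath_of_nb {gv : ℕ} (hcyc : ∀ (a : V) (w : G.Walk a a), w.IsCycle → gv ≤ w.length)
    {u v : V} (p : G.Walk u v) (hnb : p.NonBacktracking) (hlen : p.length < gv) : p.IsPath := by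
  induction p with
  | nil => exact SimpleGraph.Walk.IsPath.nil
  | cons ha p' ih =>
    have hp' : p'.IsPath := ih (nb_tail hnb) (by rw [SimpleGraph.Walk.length_cons] at hlen; omega)
    rw [SimpleGraph.Walk.cons_isPath_iff]
    refine ⟨hp', fun hu => ?_⟩
    have hqpath := hp'.takeUntil hu
    have hcycle : (SimpleGraph.Walk.cons ha (p'.takeUntil _ hu)).IsCycle := by
      rw [SimpleGraph.Walk.cons_isCycle_iff]
      refine ⟨hqpath, fun he => ?_⟩
      obtain ⟨d, hd, hdsnd⟩ := first_dart_of_end_edge _ hqpath ha.ne he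
      have hdfst := darts_head?_fst _ d hd
      -- d is also the first dart of p'
      have hq_ne : (p'.takeUntil _ hu).darts ≠ [] := by
        intro hcon; rw [hcon] at hd; simp at hd
      have hfirst : d ∈ p'.darts.head? := by
        have hsplit : p'.darts = (p'.takeUntil _ hu).darts ++ (p'.dropUntil _ hu).darts := by
          rw [← SimpleGraph.Walk.darts_append, p'.take_spec hu]
        rw [hsplit, List.head?_append_of_ne_nil _ hq_ne]
        exact hd
      unfold SimpleGraph.Walk.NonBacktracking at hnb
      rw [SimpleGraph.Walk.darts_cons, List.Chain', List.isChain_cons] at hnb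
      refine hnb.1 d hfirst ?_
      apply SimpleGraph.Dart.ext
      rw [SimpleGraph.Dart.symm_toProd]
      exact Prod.ext hdfst hdsnd
    have hle := hcyc _ _ hcycle
    have hle2 := p'.length_takeUntil_le hu
    have hle3 : gv ≤ (p'.takeUntil _ hu).length + 1 := by simpa using hle
    rw [SimpleGraph.Walk.length_cons] at hlen
    omega

lemma nb_unique {gv : ℕ} (hcyc : ∀ (a : V) (w : G.Walk a a), w.IsCycle → gv ≤ w.length) :
    ∀ (N : ℕ) {v u : V} (p q : G.Walk v u), p.NonBacktracking → q.NonBacktracking →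
      p.length + q.length ≤ N → p.length + q.length < gv → p = q := by
  intro N
  induction N with
  | zero =>
    intro v u p q _ _ hN _
    cases p with
    | nil =>
      cases q with
      | nil => rfl
      | cons hb q' => simp [SimpleGraph.Walk.length_cons] at hN
    | cons ha p' => simp [SimpleGraph.Walk.length_cons] at hN
  | succ N ih =>
    intro v u p q hp hq hN hg
    cases p with
    | nil =>
      cases q with
      | nil => rfl
      | cons hb q' =>
        exfalso
        have hpath : (SimpleGraph.Walk.cons hb q').IsPath :=
          isPath_of_nb hcyc _ hq (by simpa using hg)
        exact closed_not_path (by simp) hpath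
    | cons ha p' =>
      cases q with
      | nil =>
        exfalso
        have hpath : (SimpleGraph.Walk.cons ha p').IsPath :=
          isPath_of_nb hcyc _ hp (by simpa using hg)
        exact closed_not_path (by simp) hpath
      | cons hb q' =>
        rename_i x₁ x₂
        rw [SimpleGraph.Walk.length_cons, SimpleGraph.Walk.length_cons] at hN hg
        by_cases hx : x₁ = x₂
        · subst hx
          have h' := ih p' q' (nb_tail hp) (nb_tail hq) (by omega) (by omega)
          rw [h']
        · exfalso
          set c := (SimpleGraph.Walk.cons ha p').reverse.append (SimpleGraph.Walk.cons hb q')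
            with hc
          have hcnb : c.NonBacktracking := by
            unfold SimpleGraph.Walk.NonBacktracking
            rw [hc, SimpleGraph.Walk.darts_append, List.Chain', List.isChain_append]
            refine ⟨nb_reverse hp, hq, ?_⟩
            intro d1 hd1 d2 hd2
            rw [SimpleGraph.Walk.darts_reverse, List.getLast?_reverse, List.head?_map,
              SimpleGraph.Walk.darts_cons, List.head?_cons] at hd1
            rw [SimpleGraph.Walk.darts_cons, List.head?_cons] at hd2
            obtain rfl : _ = d1 := by simpa [Option.mem_def] using hd1
            obtain rfl : _ = d2 := by simpa [Option.mem_def] using hd2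
            intro hcon
            apply hx
            have h2 := congrArg (fun d : G.Dart => d.snd) hcon
            simp only [SimpleGraph.Dart.symm_symm] at h2
            exact h2.symm
          have hlencalc : c.length = (p'.length + 1) + (q'.length + 1) := by simp [hc]
          have hpath : c.IsPath := isPath_of_nb hcyc c hcnb (by omega)
          refine closed_not_path ?_ hpath
          intro hcon
          have h3 : c.darts.length = 0 := by rw [hcon]; rfl
          rw [SimpleGraph.Walk.length_darts, hlencalc] at h3
          omega


lemma some_head {α : Type*} {l : List α} (h : l ≠ []) : l.head? = some (l.head h) :=
  List.head?_eq_head h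

lemma some_getLast {α : Type*} {l : List α} (h : l ≠ []) : l.getLast? = some (l.getLast h) :=
  List.getLast?_eq_getLast_of_ne_nil h

lemma dist_of_infix_aux (hconn : G.Connected) {gv : ℕ} {v a b : V} (c : G.Walk v v)
    (hg : c.darts.length = gv) {w : G.Walk a b} (hwne : w.darts ≠ [])
    (hlt : w.length < gv) (s t : List G.Dart)
    (hst : s ++ (w.darts ++ t) = c.darts ++ c.darts) (hsle : s.length ≤ gv) :
    G.dist b a ≤ gv - w.length := by
  obtain ⟨dw, hdw⟩ : ∃ dw, w.darts.head? = some dw := ⟨_, some_head hwne⟩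
  have ha' : dw.fst = a := darts_head?_fst w dw hdw
  have hb' : (w.darts.getLast hwne).snd = b :=
    darts_getLast?_snd w _ (some_getLast hwne)
  have hlen2 : s.length + (w.length + t.length) = gv + gv := by
    have h0 := congrArg List.length hst
    simpa [hg] using h0
  by_cases hcase : s.length + w.length ≤ gv
  · -- Case A : w.darts lies within the first copy
    set t₁ := t.take (gv - s.length - w.length) with ht₁
    have hlt₁ : t₁.length = gv - s.length - w.length := by
      rw [ht₁, List.length_take]; omega
    have hsplit : (s ++ (w.darts ++ t₁)) ++ t.drop (gv - s.length - w.length) = c.darts ++ c.darts := by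
      rw [← hst]
      simp [List.append_assoc, ht₁, List.take_append_drop]
    have hcd : c.darts = s ++ (w.darts ++ t₁) :=
      ((List.append_inj hsplit (by simp [hlt₁, hg]; omega)).1).symm
    have hva : G.dist v a ≤ s.length := by
      by_cases hs0 : s = []
      · have hmem : dw ∈ c.darts.head? := by
          rw [hcd, hs0, List.nil_append, List.head?_append_of_ne_nil _ hwne]
          exact hdw
        have h1 := darts_head?_fst c dw hmem
        rw [ha'] at h1
        simp [← h1, SimpleGraph.dist_self]
      · obtain ⟨df, hdf⟩ : ∃ df, s.head? = some df := ⟨_, some_head hs0⟩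
        obtain ⟨dl, hdl⟩ : ∃ dl, s.getLast? = some dl := ⟨_, some_getLast hs0⟩
        have hseg := dist_seg hconn c [] s (w.darts ++ t₁) (by simpa using hcd) df hdf dl hdl
        have h1 : df.fst = v := darts_head?_fst c df
          (by rw [hcd, List.head?_append_of_ne_nil _ hs0]; exact hdf)
        have h2 : dl.snd = a := by
          have h3 := chain_boundary c hcd dl hdl dw
            (by rw [List.head?_append_of_ne_nil _ hwne]; exact hdw)
          exact h3.trans ha'
        rw [h1, h2] at hseg
        exact hseg
    have hbv : G.dist b v ≤ gv - s.length - w.length := by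
      by_cases ht0 : t₁ = []
      · have hmem : (w.darts.getLast hwne) ∈ c.darts.getLast? := by
          rw [hcd, ht0, List.append_nil, List.getLast?_append_of_ne_nil _ hwne]
          exact some_getLast hwne
        have h1 := darts_getLast?_snd c _ hmem
        rw [hb'] at h1
        simp [h1, SimpleGraph.dist_self]
      · obtain ⟨df, hdf⟩ : ∃ df, t₁.head? = some df := ⟨_, some_head ht0⟩
        obtain ⟨dl, hdl⟩ : ∃ dl, t₁.getLast? = some dl := ⟨_, some_getLast ht0⟩
        have hcd' : c.darts = (s ++ w.darts) ++ (t₁ ++ []) := by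
          rw [hcd]; simp [List.append_assoc]
        have hseg := dist_seg hconn c (s ++ w.darts) t₁ [] hcd' df hdf dl hdl
        have h1 : df.fst = b := by
          have h3 := chain_boundary c (by rw [hcd]; simp [List.append_assoc] :
              c.darts = (s ++ w.darts) ++ t₁) _
            (by rw [List.getLast?_append_of_ne_nil _ hwne]; exact some_getLast hwne) df hdf
          rw [hb'] at h3
          exact h3.symm
        have h2 : dl.snd = v := darts_getLast?_snd c dl
          (by rw [hcd', List.append_nil, List.getLast?_append_of_ne_nil _ ht0]; exact hdl)
        rw [h1, h2] at hseg
        rw [hlt₁] at hseg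
        exact hseg
    calc G.dist b a ≤ G.dist b v + G.dist v a := hconn.dist_triangle
      _ ≤ (gv - s.length - w.length) + s.length := Nat.add_le_add hbv hva
      _ ≤ gv - w.length := by omega
  · -- Case B : w.darts straddles the two copies
    set w₁ := w.darts.take (gv - s.length) with hw₁
    set w₂ := w.darts.drop (gv - s.length) with hw₂
    have hw12 : w₁ ++ w₂ = w.darts := List.take_append_drop _ _
    have hlw₁ : w₁.length = gv - s.length := by rw [hw₁, List.length_take, w.length_darts]; omega
    have hlw₂ : w₂.length = w.length - (gv - s.length) := by rw [hw₂, List.length_drop, w.length_darts]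
    have hsplit : (s ++ w₁) ++ (w₂ ++ t) = c.darts ++ c.darts := by
      rw [← hst, List.append_assoc, ← List.append_assoc w₁, hw12]
    have hinj := List.append_inj hsplit (by simp [hlw₁, hg]; omega)
    have hcd1 : c.darts = s ++ w₁ := hinj.1.symm
    have hcd2 : c.darts = w₂ ++ t := hinj.2.symm
    have hw₂ne : w₂ ≠ [] := by
      intro h0
      have := congrArg List.length h0
      simp [hlw₂] at this
      omega
    have hs_split : s.take w₂.length ++ (s.drop w₂.length ++ w₁) = w₂ ++ t := by
      rw [← List.append_assoc, List.take_append_drop]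
      exact hcd1.symm.trans hcd2
    have hw2le : w₂.length ≤ s.length := by rw [hlw₂]; omega
    have hinj2 := List.append_inj hs_split (by simp only [List.length_take]; omega)
    set m := s.drop w₂.length with hm
    have hteq : t = m ++ w₁ := hinj2.2.symm
    have hcdm : c.darts = w₂ ++ (m ++ w₁) := by rw [hcd2, hteq]
    have hmlen : m.length = s.length - w₂.length := by rw [hm, List.length_drop]
    obtain ⟨dlw, hdlw⟩ : ∃ d, w₂.getLast? = some d := ⟨_, some_getLast hw₂ne⟩
    have hbw : dlw.snd = b := by
      have h4 : w.darts.getLast? = some dlw :=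
        (congrArg List.getLast? hw12.symm).trans
          ((List.getLast?_append_of_ne_nil _ hw₂ne).trans hdlw)
      rw [some_getLast hwne] at h4
      rw [← Option.some_inj.mp h4]
      exact hb'
    by_cases hm0 : m = []
    · by_cases hw₁0 : w₁ = []
      · exfalso
        have := congrArg List.length hcdm
        simp [hw₁0, hm0, hlw₂, hg] at this
        omega
      · obtain ⟨dfw, hdfw⟩ : ∃ d, w₁.head? = some d := ⟨_, some_head hw₁0⟩
        have hba := chain_boundary c (by rw [hcdm, hm0]; simp) dlw hdlw dfw hdfw
        have h6 : w.darts.head? = w₁.head? :=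
          (congrArg List.head? hw12.symm).trans (List.head?_append_of_ne_nil _ hw₁0)
        have hdweq : dw = dfw := Option.some_inj.mp ((hdw.symm.trans h6).trans hdfw)
        have : b = a := by
          rw [← hbw, hba, ← hdweq, ha']
        have hz : G.dist b a = 0 := by rw [this]; exact SimpleGraph.dist_self
        omega
    · obtain ⟨df, hdf⟩ : ∃ d, m.head? = some d := ⟨_, some_head hm0⟩
      obtain ⟨dl, hdl⟩ : ∃ d, m.getLast? = some d := ⟨_, some_getLast hm0⟩
      have hseg := dist_seg hconn c w₂ m w₁ (by rw [hcdm]) df hdf dl hdl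
      have h1 : df.fst = b := by
        have h3 := chain_boundary c hcdm dlw hdlw df
          (by rw [List.head?_append_of_ne_nil _ hm0]; exact hdf)
        rw [← h3, hbw]
      have h2 : dl.snd = a := by
        by_cases hw₁0 : w₁ = []
        · have hw₂w : w₂ = w.darts := by rw [← hw12, hw₁0, List.nil_append]
          have hav : a = v := by
            have hmem : dw ∈ c.darts.head? := by
              rw [hcd2, List.head?_append_of_ne_nil _ hw₂ne, hw₂w]
              exact hdw
            rw [← ha']
            exact darts_head?_fst c dw hmem
          rw [hav]
          exact darts_getLast?_snd c dl
            (by rw [hcdm, hw₁0, List.append_nil, List.getLast?_append_of_ne_nil _ hm0]; exact hdl)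
        · obtain ⟨dfw, hdfw⟩ : ∃ d, w₁.head? = some d := ⟨_, some_head hw₁0⟩
          have h6 : w.darts.head? = w₁.head? :=
            (congrArg List.head? hw12.symm).trans (List.head?_append_of_ne_nil _ hw₁0)
          have hdweq : dw = dfw := Option.some_inj.mp ((hdw.symm.trans h6).trans hdfw)
          have h3 := chain_boundary c (by rw [hcdm, ← List.append_assoc]) dl
            (by rw [List.getLast?_append_of_ne_nil _ hm0]; exact hdl) dfw hdfw
          rw [h3, ← hdweq, ha']
      rw [h1, h2] at hseg
      calc G.dist b a ≤ m.length := hseg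
        _ ≤ gv - w.length := by
            rw [hmlen]
            omega

lemma dist_of_infix (hconn : G.Connected) {gv : ℕ} {v a b : V} (c : G.Walk v v)
    (hg : c.length = gv) {w : G.Walk a b} (hwne : w.darts ≠ [])
    (hlt : w.length < gv) (hinf : w.darts <:+: c.darts ++ c.darts) :
    G.dist b a ≤ gv - w.length := by
  have hg' : c.darts.length = gv := by rw [SimpleGraph.Walk.length_darts, hg]
  obtain ⟨s, t, hst⟩ := hinf
  have hst' : s ++ (w.darts ++ t) = c.darts ++ c.darts := by
    rw [← List.append_assoc]; exact hst
  by_cases hsle : s.length ≤ gv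
  · exact dist_of_infix_aux hconn c hg' hwne hlt s t hst' hsle
  · -- strip off one full copy of c from the front of s
    have hlen2 : s.length + (w.length + t.length) = gv + gv := by
      have h0 := congrArg List.length hst'
      simpa [hg'] using h0
    have hsplit : s.take gv ++ (s.drop gv ++ (w.darts ++ t)) = c.darts ++ c.darts := by
      rw [← List.append_assoc (s.take gv), List.take_append_drop]
      exact hst'
    have hinj := List.append_inj hsplit (by simp [List.length_take, hg']; omega)
    have hnew : s.drop gv ++ (w.darts ++ t) = c.darts := hinj.2
    have hnew2 : s.drop gv ++ (w.darts ++ (t ++ c.darts)) = c.darts ++ c.darts := by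
      rw [← List.append_assoc, ← List.append_assoc, List.append_assoc _ w.darts t, hnew]
    exact dist_of_infix_aux hconn c hg' hwne hlt _ _ hnew2
      (by simp [List.length_drop]; omega)


lemma adj_of_dist_one (hconn : G.Connected) {x y : V} (h : G.dist x y = 1) : G.Adj x y := by
  obtain ⟨p, hp, hl⟩ := hconn.exists_path_of_dist x y
  rw [h] at hl
  cases p with
  | nil => simp at hl
  | cons ha p' =>
    cases p' with
    | nil => exact ha
    | cons hb p'' => simp [SimpleGraph.Walk.length_cons] at hl

lemma getLast_dart_dist (hconn : G.Connected) {x u : V} (p : G.Walk x u)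
    {dl : G.Dart} (hdl : p.darts.getLast? = some dl) :
    G.dist x dl.fst ≤ p.length - 1 := by
  have hne : p.darts ≠ [] := by intro h0; rw [h0] at hdl; simp at hdl
  have hdl' : p.darts.getLast hne = dl := by
    rw [some_getLast hne] at hdl; exact Option.some_inj.mp hdl
  have hsplit : p.darts = p.darts.dropLast ++ [dl] := by
    rw [← hdl']; exact (List.dropLast_append_getLast hne).symm
  by_cases h0 : p.darts.dropLast = []
  · have hmem : dl ∈ p.darts.head? := by
      rw [hsplit, h0, List.nil_append]; rfl
    have := darts_head?_fst p _ hmem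
    simp [this, SimpleGraph.dist_self]
  · obtain ⟨df, hdf⟩ : ∃ d, p.darts.dropLast.head? = some d := ⟨_, some_head h0⟩
    obtain ⟨dm, hdm⟩ : ∃ d, p.darts.dropLast.getLast? = some d := ⟨_, some_getLast h0⟩
    have hseg := dist_seg hconn p [] p.darts.dropLast [dl]
      (by simpa using hsplit) df hdf dm hdm
    have h1 : df.fst = x := darts_head?_fst p df
      (by rw [hsplit, List.head?_append_of_ne_nil _ h0]; exact hdf)
    have h2 : dm.snd = dl.fst := chain_boundary p hsplit dm hdm dl rfl
    rw [h1, h2] at hseg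
    have h3 : p.darts.dropLast.length = p.length - 1 := by
      rw [List.length_dropLast, p.length_darts]
    rw [h3] at hseg
    exact hseg

lemma exists_penult (hconn : G.Connected) {x u : V} {j : ℕ} (h : G.dist x u = j + 1) :
    ∃ y, G.Adj y u ∧ G.dist x y = j := by
  obtain ⟨p, hp, hl⟩ := hconn.exists_path_of_dist x u
  rw [h] at hl
  have hne : p.darts ≠ [] := by
    intro h0
    have := congrArg List.length h0
    rw [p.length_darts, hl] at this
    simp at this
  refine ⟨(p.darts.getLast hne).fst, ?_, ?_⟩
  · have hadj := (p.darts.getLast hne).adj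
    have hsnd := darts_getLast?_snd p _ (some_getLast hne)
    rwa [hsnd] at hadj
  · have hle : G.dist x (p.darts.getLast hne).fst ≤ j := by
      have := getLast_dart_dist hconn p (some_getLast hne)
      rw [hl] at this
      simpa using this
    have hadj := (p.darts.getLast hne).adj
    have hsnd := darts_getLast?_snd p _ (some_getLast hne)
    rw [hsnd] at hadj
    have hge : G.dist x u ≤ G.dist x (p.darts.getLast hne).fst + 1 :=
      le_trans (hconn.dist_triangle)
        (Nat.add_le_add_left (by simpa using SimpleGraph.dist_le hadj.toWalk) _)
    omega

lemma nb_concat (hconn : G.Connected) {v u z : V} (p : G.Walk v u) (hp : p.IsPath)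
    (hl : p.length = G.dist v u) (h : G.Adj u z) (hz : G.dist v u ≤ G.dist v z) :
    (p.concat h).NonBacktracking := by
  unfold SimpleGraph.Walk.NonBacktracking
  rw [SimpleGraph.Walk.darts_concat, List.concat_eq_append, List.Chain', List.isChain_append]
  refine ⟨isPath_nb hp, List.isChain_singleton _, ?_⟩
  intro d1 hd1 d2 hd2
  obtain rfl : _ = d2 := by simpa [Option.mem_def] using hd2
  have hne : p.darts ≠ [] := by
    intro h0; rw [h0] at hd1; simp at hd1
  obtain rfl : p.darts.getLast hne = d1 := by
    rw [some_getLast hne] at hd1; simpa [Option.mem_def] using hd1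
  have hjpos : 1 ≤ p.length := by
    have := congrArg List.length (List.dropLast_append_getLast hne)
    rw [p.length_darts] at this
    simp at this
    omega
  have hdist := getLast_dart_dist hconn p (some_getLast hne)
  intro hcon
  have hzz := congrArg (fun d : G.Dart => d.snd) hcon
  simp only [SimpleGraph.Dart.symm_toProd, Prod.snd_swap] at hzz
  -- hzz : z = (getLast).fst
  rw [← hzz] at hdist
  rw [hl] at hdist
  omega

lemma back_neighbor_unique {gv : ℕ}
    (hcyc : ∀ (a : V) (w : G.Walk a a), w.IsCycle → gv ≤ w.length)
    (hconn : G.Connected) {v u w₁ w₂ : V} {j : ℕ}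
    (h1 : G.Adj w₁ u) (h2 : G.Adj w₂ u) (hd1 : G.dist v w₁ = j) (hd2 : G.dist v w₂ = j)
    (hdu : G.dist v u = j + 1) (hlt : (j + 1) + (j + 1) < gv) : w₁ = w₂ := by
  rcases Nat.eq_zero_or_pos j with h0 | hpos
  · rw [h0] at hd1 hd2
    have e1 : v = w₁ := (hconn.dist_eq_zero_iff).mp hd1
    have e2 : v = w₂ := (hconn.dist_eq_zero_iff).mp hd2
    rw [← e1, ← e2]
  · obtain ⟨p₁, hp₁, hl₁⟩ := hconn.exists_path_of_dist v w₁
    obtain ⟨p₂, hp₂, hl₂⟩ := hconn.exists_path_of_dist v w₂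
    have hq₁ := nb_concat hconn p₁ hp₁ hl₁ h1 (by omega)
    have hq₂ := nb_concat hconn p₂ hp₂ hl₂ h2 (by omega)
    have heq := nb_unique hcyc ((p₁.concat h1).length + (p₂.concat h2).length)
      (p₁.concat h1) (p₂.concat h2) hq₁ hq₂ le_rfl
      (by rw [SimpleGraph.Walk.length_concat, SimpleGraph.Walk.length_concat]; omega)
    have hdarts := congrArg SimpleGraph.Walk.darts heq
    rw [SimpleGraph.Walk.darts_concat, SimpleGraph.Walk.darts_concat,
      List.concat_eq_append, List.concat_eq_append] at hdarts
    have hlast := congrArg List.getLast? hdarts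
    rw [List.getLast?_append_of_ne_nil _ (by simp), List.getLast?_append_of_ne_nil _ (by simp)]
      at hlast
    simp only [List.getLast?_singleton, Option.some_inj] at hlast
    exact congrArg (fun d : G.Dart => d.fst) hlast

lemma dist_succ_of_adj {gv : ℕ}
    (hcyc : ∀ (a : V) (w : G.Walk a a), w.IsCycle → gv ≤ w.length)
    (hconn : G.Connected) {v u z : V} (h : G.Adj u z)
    (hge : G.dist v u ≤ G.dist v z) (hlt : G.dist v u + 1 + G.dist v z < gv) :
    G.dist v z = G.dist v u + 1 := by
  obtain ⟨p, hp, hl⟩ := hconn.exists_path_of_dist v u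
  obtain ⟨r, hr, hlr⟩ := hconn.exists_path_of_dist v z
  have hq := nb_concat hconn p hp hl h hge
  have heq := nb_unique hcyc ((p.concat h).length + r.length) (p.concat h) r hq
    (isPath_nb hr) le_rfl
    (by rw [SimpleGraph.Walk.length_concat]; omega)
  have := congrArg SimpleGraph.Walk.length heq
  rw [SimpleGraph.Walk.length_concat] at this
  omega


variable [Fintype V]

/-- The sphere of radius `j` about `v`. -/
noncomputable def sphere (G : SimpleGraph V) (v : V) (j : ℕ) : Finset V :=
  Finset.univ.filter (fun u => G.dist v u = j)

/-- Neighbours of `u` lying at distance `j` from `v`. -/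
noncomputable def nbrIn (G : SimpleGraph V) [DecidableRel G.Adj] (v u : V) (j : ℕ) : Finset V :=
  (G.neighborFinset u).filter (fun w => G.dist v w = j)

lemma double_count [DecidableRel G.Adj] (v : V) (j₁ j₂ : ℕ) :
    ∑ u ∈ sphere G v j₁, (nbrIn G v u j₂).card
      = ∑ w ∈ sphere G v j₂, (nbrIn G v w j₁).card := by
  have key : ∀ ja jb : ℕ, ∑ u ∈ sphere G v ja, (nbrIn G v u jb).card
      = ∑ u : V, ∑ w : V,
          (if (G.dist v u = ja ∧ G.Adj u w ∧ G.dist v w = jb) then 1 else 0) := by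
    intro ja jb
    rw [sphere, Finset.sum_filter]
    refine Finset.sum_congr rfl fun u _ => ?_
    by_cases hu : G.dist v u = ja
    · rw [if_pos hu, nbrIn, SimpleGraph.neighborFinset_eq_filter, Finset.filter_filter,
        Finset.card_filter]
      exact Finset.sum_congr rfl fun w _ => by simp [hu]
    · rw [if_neg hu]
      symm
      exact Finset.sum_eq_zero fun w _ => by simp [hu]
  rw [key, key, Finset.sum_comm]
  refine Finset.sum_congr rfl fun w _ => Finset.sum_congr rfl fun u _ => ?_
  refine if_congr ?_ rfl rfl
  constructor
  · rintro ⟨h1, h2, h3⟩; exact ⟨h3, h2.symm, h1⟩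
  · rintro ⟨h1, h2, h3⟩; exact ⟨h3, h2.symm, h1⟩

lemma nbrIn_back_card {gv : ℕ}
    (hcyc : ∀ (a : V) (w : G.Walk a a), w.IsCycle → gv ≤ w.length)
    (hconn : G.Connected) [DecidableRel G.Adj] {v u : V} {j : ℕ}
    (hu : G.dist v u = j + 1) (hlt : (j + 1) + (j + 1) < gv) :
    (nbrIn G v u j).card = 1 := by
  obtain ⟨y, hy, hyd⟩ := exists_penult hconn hu
  rw [Finset.card_eq_one]
  refine ⟨y, ?_⟩
  ext w
  simp only [nbrIn, Finset.mem_filter, SimpleGraph.mem_neighborFinset, Finset.mem_singleton]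
  constructor
  · rintro ⟨hadj, hdw⟩
    exact back_neighbor_unique hcyc hconn hadj.symm hy hdw hyd hu hlt
  · rintro rfl
    exact ⟨hy.symm, hyd⟩

lemma nbrIn_flat_card {gv : ℕ}
    (hcyc : ∀ (a : V) (w : G.Walk a a), w.IsCycle → gv ≤ w.length)
    (hconn : G.Connected) [DecidableRel G.Adj] {v u : V} {j : ℕ}
    (hu : G.dist v u = j) (hlt : 2 * j + 1 < gv) : (nbrIn G v u j).card = 0 := by
  rw [Finset.card_eq_zero, Finset.eq_empty_iff_forall_notMem]
  intro w hw
  simp only [nbrIn, Finset.mem_filter, SimpleGraph.mem_neighborFinset] at hw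
  have := dist_succ_of_adj hcyc hconn hw.1 (by omega : G.dist v u ≤ G.dist v w) (by omega)
  omega

lemma dist_le_succ_of_adj (hconn : G.Connected) {v u w : V} (h : G.Adj u w) :
    G.dist v w ≤ G.dist v u + 1 :=
  le_trans hconn.dist_triangle
    (Nat.add_le_add_left (by simpa using SimpleGraph.dist_le h.toWalk) _)

lemma nbrIn_forward_card {gv : ℕ}
    (hcyc : ∀ (a : V) (w : G.Walk a a), w.IsCycle → gv ≤ w.length)
    (hconn : G.Connected) [DecidableRel G.Adj] {d : ℕ} {v u : V} {k : ℕ}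
    (hu : G.dist v u = k + 1) (hlt : 2 * k + 3 < gv)
    (hd : (G.neighborFinset u).card = d) :
    (nbrIn G v u (k + 2)).card = d - 1 := by
  have hsub : ∀ w ∈ G.neighborFinset u,
      G.dist v w = k ∨ G.dist v w = k + 1 ∨ G.dist v w = k + 2 := by
    intro w hw
    rw [SimpleGraph.mem_neighborFinset] at hw
    have h1 := dist_le_succ_of_adj hconn (v := v) hw
    have h2 := dist_le_succ_of_adj hconn (v := v) hw.symm
    omega
  have hunion : G.neighborFinset u
      = nbrIn G v u k ∪ (nbrIn G v u (k + 1) ∪ nbrIn G v u (k + 2)) := by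
    ext w
    simp only [nbrIn, Finset.mem_union, Finset.mem_filter]
    constructor
    · intro hw
      rcases hsub w hw with h | h | h
      · exact Or.inl ⟨hw, h⟩
      · exact Or.inr (Or.inl ⟨hw, h⟩)
      · exact Or.inr (Or.inr ⟨hw, h⟩)
    · rintro (⟨hw, -⟩ | ⟨hw, -⟩ | ⟨hw, -⟩) <;> exact hw
  have hdisj1 : Disjoint (nbrIn G v u k) (nbrIn G v u (k + 1) ∪ nbrIn G v u (k + 2)) := by
    rw [Finset.disjoint_left]
    intro w hw hw2
    simp only [nbrIn, Finset.mem_union, Finset.mem_filter] at hw hw2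
    omega
  have hdisj2 : Disjoint (nbrIn G v u (k + 1)) (nbrIn G v u (k + 2)) := by
    rw [Finset.disjoint_left]
    intro w hw hw2
    simp only [nbrIn, Finset.mem_filter] at hw hw2
    omega
  rw [hunion, Finset.card_union_of_disjoint hdisj1, Finset.card_union_of_disjoint hdisj2] at hd
  rw [nbrIn_back_card hcyc hconn hu (by omega)] at hd
  rw [nbrIn_flat_card hcyc hconn hu (by omega)] at hd
  omega

end Aux

/-- A connected `d`-regular graph (`d ≥ 3`) of girth `g` in which every
non-backtracking walk of length `⌊g/2⌋ + 1` extends to a closed geodesic of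
length `g` attains the Moore bound, i.e. it is a Moore graph. -/
theorem moore_of_every_walk_extends {V : Type*} [Fintype V] (G : SimpleGraph V)
    [DecidableRel G.Adj]
    (n d g : ℕ) (hd : 3 ≤ d) (hreg : G.IsRegularOfDegree d) (hconn : G.Connected)
    (hg : G.girth = g) (hn : Fintype.card V = n)
    (hext : ∀ (a b : V) (w : G.Walk a b), w.NonBacktracking → w.length = g / 2 + 1 →
      ContainedInClosedGeodesic G w g) :
    (Odd g → n = 1 + d * ∑ j ∈ range ((g - 3) / 2 + 1), (d - 1) ^ j) ∧
    (Even g → n = 2 * ∑ j ∈ range ((g - 2) / 2 + 1), (d - 1) ^ j) := by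
  classical
  subst hn
  obtain ⟨v⟩ := hconn.nonempty
  have hdeg : ∀ u : V, (G.neighborFinset u).card = d := fun u => by
    rw [SimpleGraph.card_neighborFinset_eq_degree]; exact hreg u
  have hedge : ∀ x : V, ∃ y, G.Adj x y := by
    intro x
    have h3 : 0 < (G.neighborFinset x).card := by rw [hdeg x]; omega
    obtain ⟨y, hy⟩ := Finset.card_pos.mp h3
    rw [SimpleGraph.mem_neighborFinset] at hy
    exact ⟨y, hy⟩
  have hgpos : g ≠ 0 := by
    intro h0
    obtain ⟨y, hxy⟩ := hedge v
    have hnb : (SimpleGraph.Walk.cons hxy SimpleGraph.Walk.nil).NonBacktracking := by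
      unfold SimpleGraph.Walk.NonBacktracking
      simp [List.Chain']
    obtain ⟨v', c, ⟨hcne, -, -⟩, hclen, -⟩ :=
      hext v y (SimpleGraph.Walk.cons hxy SimpleGraph.Walk.nil) hnb (by simp [h0])
    apply hcne
    have h4 : c.darts.length = 0 := by rw [c.length_darts, hclen, h0]
    exact List.length_eq_zero_iff.mp h4
  have hNA : ¬ G.IsAcyclic := fun hA =>
    hgpos (by rw [← hg]; exact SimpleGraph.girth_eq_zero.mpr hA)
  have hg3 : 3 ≤ g := by rw [← hg]; exact SimpleGraph.three_le_girth hNA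
  have hcyc : ∀ (a : V) (w : G.Walk a a), w.IsCycle → g ≤ w.length := by
    intro a w hw
    rw [← hg]
    exact Aux.girth_le_cycle hw
  set R := g / 2 with hR
  have hext' : ∀ (a b : V) (wk : G.Walk a b), wk.NonBacktracking → wk.length = R + 1 →
      G.dist a b ≤ g - (R + 1) := by
    intro a b wk hnb hlen
    obtain ⟨v', c, ⟨hcne, -, -⟩, hclen, hinf⟩ := hext a b wk hnb (by omega)
    have hwne : wk.darts ≠ [] := by
      intro h0
      have h5 := congrArg List.length h0
      rw [wk.length_darts, hlen] at h5
      simp at h5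
    have hbd := Aux.dist_of_infix hconn c hclen hwne (by omega) hinf
    rw [hlen] at hbd
    rw [SimpleGraph.dist_comm]
    exact hbd
  have hdiam : ∀ u, G.dist v u ≤ R := by
    have main : ∀ m : ℕ, ∀ u, G.dist v u = m → m ≤ R := by
      intro m
      induction m using Nat.strong_induction_on with
      | _ m ih =>
        intro u hdu
        by_contra hcon
        push_neg at hcon
        rcases Nat.lt_or_ge m (R + 2) with hm | hm
        · obtain ⟨p, hp, hl⟩ := hconn.exists_path_of_dist v u
          have h6 := hext' v u p (Aux.isPath_nb hp) (by omega)
          omega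
        · obtain ⟨y, hy, hyd⟩ :=
            Aux.exists_penult hconn (show G.dist v u = (m - 1) + 1 by omega)
          have h7 := ih (m - 1) (by omega) y hyd
          omega
    intro u
    exact main _ u rfl
  have hSfib : Fintype.card V = ∑ j ∈ range (R + 1), (Aux.sphere G v j).card := by
    simp only [Aux.sphere]
    rw [← Finset.card_univ]
    exact Finset.card_eq_sum_card_fiberwise
      (fun u _ => Finset.mem_range.mpr (Nat.lt_succ_of_le (hdiam u)))
  have hsph0 : Aux.sphere G v 0 = {v} := by
    ext u
    simp only [Aux.sphere, Finset.mem_filter, Finset.mem_univ, true_and, Finset.mem_singleton]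
    constructor
    · intro h; exact ((hconn.dist_eq_zero_iff).mp h).symm
    · rintro rfl; exact SimpleGraph.dist_self
  have hS0 : (Aux.sphere G v 0).card = 1 := by rw [hsph0]; rfl
  have hS1 : (Aux.sphere G v 1).card = d := by
    have hdc := Aux.double_count (G := G) v 0 1
    have hnv : Aux.nbrIn G v v 1 = G.neighborFinset v := by
      rw [Aux.nbrIn]
      apply Finset.filter_true_of_mem
      intro w hw
      rw [SimpleGraph.mem_neighborFinset] at hw
      have h1 : G.dist v w ≤ 1 := by
        have h8 := Aux.dist_le_succ_of_adj hconn (v := v) hw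
        simpa [SimpleGraph.dist_self] using h8
      have h2 : G.dist v w ≠ 0 := fun h0 => hw.ne ((hconn.dist_eq_zero_iff).mp h0)
      omega
    have hone : ∀ w ∈ Aux.sphere G v 1, (Aux.nbrIn G v w 0).card = 1 := by
      intro w hw
      simp only [Aux.sphere, Finset.mem_filter] at hw
      have hadj : G.Adj v w := Aux.adj_of_dist_one hconn hw.2
      rw [Finset.card_eq_one]
      refine ⟨v, ?_⟩
      ext x
      simp only [Aux.nbrIn, Finset.mem_filter, SimpleGraph.mem_neighborFinset,
        Finset.mem_singleton]
      constructor
      · rintro ⟨-, h0⟩; exact ((hconn.dist_eq_zero_iff).mp h0).symm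
      · rintro rfl; exact ⟨hadj.symm, SimpleGraph.dist_self⟩
    rw [hsph0, Finset.sum_singleton, hnv, hdeg] at hdc
    rw [Finset.sum_congr rfl hone, Finset.sum_const, smul_eq_mul, mul_one] at hdc
    exact hdc.symm
  have hSrec : ∀ k : ℕ, 2 * (k + 2) < g →
      (Aux.sphere G v (k + 2)).card = (d - 1) * (Aux.sphere G v (k + 1)).card := by
    intro k hk
    have hdc := Aux.double_count (G := G) v (k + 1) (k + 2)
    have hl : ∀ u ∈ Aux.sphere G v (k + 1), (Aux.nbrIn G v u (k + 2)).card = d - 1 := by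
      intro u hu
      simp only [Aux.sphere, Finset.mem_filter] at hu
      exact Aux.nbrIn_forward_card hcyc hconn hu.2 (by omega) (hdeg u)
    have hrr : ∀ w ∈ Aux.sphere G v (k + 2), (Aux.nbrIn G v w (k + 1)).card = 1 := by
      intro w hw
      simp only [Aux.sphere, Finset.mem_filter] at hw
      exact Aux.nbrIn_back_card hcyc hconn hw.2 (by omega)
    rw [Finset.sum_congr rfl hl, Finset.sum_congr rfl hrr, Finset.sum_const, Finset.sum_const,
      smul_eq_mul, smul_eq_mul, mul_one] at hdc
    rw [← hdc, Nat.mul_comm]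
  have hSj : ∀ j : ℕ, 2 * (j + 1) < g →
      (Aux.sphere G v (j + 1)).card = d * (d - 1) ^ j := by
    intro j
    induction j with
    | zero => intro _; simpa using hS1
    | succ k ihk =>
      intro hk
      rw [hSrec k (by omega), ihk (by omega)]
      ring
  constructor
  · intro hodd
    have hgodd : g = 2 * R + 1 := by rcases hodd with ⟨t, ht⟩; omega
    rw [hSfib, Finset.sum_range_succ', hS0]
    rw [Finset.sum_congr rfl (fun j hj => hSj j (by
      have := Finset.mem_range.mp hj; omega))]
    have hrange : (g - 3) / 2 + 1 = R := by omega
    rw [hrange, Finset.mul_sum]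
    omega
  · intro heven
    have hgeven : g = 2 * R := by rcases heven with ⟨t, ht⟩; omega
    obtain ⟨k, hkR⟩ : ∃ k, R = k + 2 := ⟨R - 2, by omega⟩
    have hflat : ∀ u w : V, G.dist v u = R → G.dist v w = R → ¬ G.Adj u w := by
      intro u w hu hw hadj
      obtain ⟨p, hp, hl⟩ := hconn.exists_path_of_dist v u
      have hnb := Aux.nb_concat hconn p hp hl hadj (by omega)
      have h9 := hext' v w (p.concat hadj) hnb
        (by rw [SimpleGraph.Walk.length_concat]; omega)
      omega
    have htop : ∀ u, G.dist v u = R → (Aux.nbrIn G v u (k + 1)).card = d := by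
      intro u hu
      rw [← hdeg u]
      congr 1
      rw [Aux.nbrIn]
      apply Finset.filter_true_of_mem
      intro w hw
      rw [SimpleGraph.mem_neighborFinset] at hw
      have h1 := Aux.dist_le_succ_of_adj hconn (v := v) hw
      have h2 := Aux.dist_le_succ_of_adj hconn (v := v) hw.symm
      have h3 := hdiam w
      have h4 : G.dist v w ≠ R := fun h0 => hflat u w hu h0 hw
      omega
    have hdc := Aux.double_count (G := G) v (k + 1) (k + 2)
    have hl : ∀ u ∈ Aux.sphere G v (k + 1), (Aux.nbrIn G v u (k + 2)).card = d - 1 := by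
      intro u hu
      simp only [Aux.sphere, Finset.mem_filter] at hu
      exact Aux.nbrIn_forward_card hcyc hconn hu.2 (by omega) (hdeg u)
    have hrr : ∀ w ∈ Aux.sphere G v (k + 2), (Aux.nbrIn G v w (k + 1)).card = d := by
      intro w hw
      simp only [Aux.sphere, Finset.mem_filter] at hw
      exact htop w (by omega)
    rw [Finset.sum_congr rfl hl, Finset.sum_congr rfl hrr, Finset.sum_const, Finset.sum_const,
      smul_eq_mul, smul_eq_mul] at hdc
    have hSk1 : (Aux.sphere G v (k + 1)).card = d * (d - 1) ^ k := hSj k (by omega)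
    have hStop : (Aux.sphere G v (k + 2)).card = (d - 1) ^ (k + 1) := by
      have hd0 : 0 < d := by omega
      apply Nat.eq_of_mul_eq_mul_left hd0
      calc d * (Aux.sphere G v (k + 2)).card = (Aux.sphere G v (k + 2)).card * d :=
            Nat.mul_comm _ _
        _ = (Aux.sphere G v (k + 1)).card * (d - 1) := hdc.symm
        _ = d * (d - 1) ^ k * (d - 1) := by rw [hSk1]
        _ = d * (d - 1) ^ (k + 1) := by ring
    rw [hSfib, Finset.sum_range_succ', hS0, hkR, Finset.sum_range_succ, hStop]
    rw [Finset.sum_congr rfl (fun j hj => hSj j (by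
      have := Finset.mem_range.mp hj; omega))]
    have hrange : (g - 2) / 2 + 1 = k + 2 := by omega
    rw [hrange]
    -- arithmetic identity
    have harith : ∀ m : ℕ, (∑ j ∈ range m, d * (d - 1) ^ j + (d - 1) ^ m) + 1
        = 2 * ∑ j ∈ range (m + 1), (d - 1) ^ j := by
      intro m
      induction m with
      | zero => simp
      | succ m ihm =>
        rw [Finset.sum_range_succ (fun j => d * (d - 1) ^ j) m,
          Finset.sum_range_succ (fun j => (d - 1) ^ j) (m + 1)]
        have hp : d * (d - 1) ^ m = (d - 1) ^ (m + 1) + (d - 1) ^ m := by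
          calc d * (d - 1) ^ m = ((d - 1) + 1) * (d - 1) ^ m := by
                congr 1; omega
            _ = (d - 1) * (d - 1) ^ m + (d - 1) ^ m := by rw [Nat.succ_mul]
            _ = (d - 1) ^ (m + 1) + (d - 1) ^ m := by rw [pow_succ, Nat.mul_comm ((d-1)^m)]
        omega
    have harith' := harith (k + 1)
    have h2 : (k + 1) + 1 = k + 2 := by omega
    rw [h2] at harith'
    omega
end

section
/- In a graph of girth g on n vertices with minimal degree d and depth δ ≥ 1, the kissing number satisfies kiss(G) ≥ n·d·(d-1)^(δ-1) / g. -/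
open SimpleGraph List

open List (Vector)

section Aux

variable {V : Type*} {G : SimpleGraph V}

/-- Walks from a common start with equal dart lists are equal. -/
lemma walk_eq_of_darts_eq : ∀ {a b c : V} (w : G.Walk a b) (w' : G.Walk a c),
    w.darts = w'.darts → b = c ∧ HEq w w' := by
  intro a b c w
  induction w with
  | nil =>
    intro w' h
    cases w' with
    | nil => exact ⟨rfl, HEq.rfl⟩
    | cons h' p' => simp [Walk.darts] at h
  | @cons u x b hadj p ih =>
    intro w' h
    cases w' with
    | nil => simp [Walk.darts] at h
    | @cons _ y _ hadj' p' =>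
      simp only [Walk.darts_cons, List.cons.injEq] at h
      obtain ⟨hd, ht⟩ := h
      have hxy : x = y := congrArg (fun d => d.toProd.2) hd
      subst hxy
      obtain ⟨hbc, hw⟩ := ih p' ht
      subst hbc
      exact ⟨rfl, heq_of_eq (by rw [eq_of_heq hw])⟩

/-- Head dart of a walk starts at the start vertex. -/
lemma head_dart_fst : ∀ {a b : V} (w : G.Walk a b) (e : G.Dart), e ∈ w.darts.head? →
    e.toProd.1 = a := by
  intro a b w
  cases w with
  | nil => simp [Walk.darts]
  | cons h p => intro e he; simp [Walk.darts] at he; rw [← he]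

/-- From a chain of darts, build a walk. -/
lemma exists_walk_of_dart_chain : ∀ (l : List G.Dart) (a : V) (e : G.Dart),
    e.toProd.1 = a → (e :: l).Chain' G.DartAdj →
    ∃ (b : V) (w : G.Walk a b), w.darts = e :: l := by
  intro l
  induction l with
  | nil =>
    intro a e ha _
    subst ha
    exact ⟨e.toProd.2, Walk.cons e.adj Walk.nil, by simp [Walk.darts]⟩
  | cons f l ih =>
    intro a e ha hch
    simp only [List.Chain', List.isChain_cons_cons] at hch
    obtain ⟨hef, hch⟩ := hch
    obtain ⟨b, w, hw⟩ := ih e.toProd.2 f hef.symm hch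
    subst ha
    exact ⟨b, Walk.cons e.adj w, by simp [Walk.darts, hw]⟩

/-- In a path from `u` to `v`, if the edge `s(u,v)` occurs, the path has length 1. -/
lemma path_length_one_of_edge : ∀ {u v : V} (p : G.Walk u v), p.IsPath →
    s(u, v) ∈ p.edges → p.length = 1 := by
  intro u v p
  induction p with
  | nil => simp
  | @cons u x v h p ih =>
    intro hp he
    rw [Walk.edges_cons, List.mem_cons] at he
    rcases he with he | he
    · rw [Sym2.eq_iff] at he
      rcases he with ⟨-, hvx⟩ | ⟨hux, hvu⟩
      · subst hvx
        have hp' : p.IsPath := hp.of_cons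
        rw [(Walk.isPath_iff_eq_nil (p := p)).mp hp']
        simp
      · exact (G.irrefl (hux ▸ h)).elim
    · exfalso
      have hu : u ∈ p.support := Walk.fst_mem_support_of_mem_edges p he
      have : u ∉ p.support := by
        have := hp.support_nodup
        rw [Walk.support_cons, List.nodup_cons] at this
        exact this.1
      exact this hu

/-- Split off a closed subwalk at a vertex recurring in the tail. -/
lemma exists_closed_subwalk {x v : V} (r : G.Walk x v) (hx : x ∈ r.support.tail) :
    ∃ (cl : G.Walk x x) (rest : List G.Dart), r.darts = cl.darts ++ rest ∧
      0 < cl.length ∧ cl.length ≤ r.length := by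
  haveI := Classical.decEq V
  cases r with
  | nil => simp at hx
  | @cons _ y _ h₂ r₂ =>
    rw [Walk.support_cons, List.tail_cons] at hx
    refine ⟨Walk.cons h₂ (r₂.takeUntil x hx), (r₂.dropUntil x hx).darts, ?_, by simp, ?_⟩
    · rw [Walk.darts_cons, Walk.darts_cons, List.cons_append]
      congr 1
      conv_lhs => rw [← r₂.take_spec hx]
      rw [Walk.darts_append]
    · have := congrArg Walk.length (r₂.take_spec hx)
      rw [Walk.length_append] at this
      rw [Walk.length_cons, Walk.length_cons]
      omega

/-- A nonempty closed non-backtracking walk that is not a cycle contains a cycle of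
length strictly less than its length. -/
lemma exists_cycle_of_closed_nb : ∀ (L : ℕ) {v : V} (w : G.Walk v v), w.length = L → 0 < L →
    w.darts.Chain' (fun d₁ d₂ => d₂ ≠ d₁.symm) → ¬ w.IsCycle →
    ∃ (u : V) (c : G.Walk u u), c.IsCycle ∧ c.length < L := by
  intro L
  induction L using Nat.strong_induction_on with
  | _ L IH =>
  intro v w hL hpos hnb hcyc
  haveI := Classical.decEq V
  cases w with
  | nil => simp at hL; omega
  | @cons _ u _ h p =>
    by_cases hnd : p.support.Nodup
    · have hp : p.IsPath := Walk.IsPath.mk' hnd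
      have he : s(v, u) ∈ p.edges := by
        by_contra he
        exact hcyc ((Walk.cons_isCycle_iff p h).mpr ⟨hp, he⟩)
      have h1 : p.length = 1 := by
        have := path_length_one_of_edge p hp (Sym2.eq_swap ▸ he)
        exact this
      exfalso
      cases p with
      | nil => simp at h1
      | @cons _ y _ h' p' =>
        cases p' with
        | nil =>
          rw [Walk.darts_cons, Walk.darts_cons, Walk.darts_nil] at hnb
          simp only [List.Chain', List.isChain_cons_cons] at hnb
          exact hnb.1 (by ext <;> simp [Dart.symm])
        | cons h'' p'' => simp [Walk.length_cons] at h1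
    · obtain ⟨x, hdup⟩ := List.exists_duplicate_iff_not_nodup.mpr hnd
      have hx : x ∈ p.support := hdup.mem
      have hcount : 2 ≤ p.support.count x := List.duplicate_iff_two_le_count.mp hdup
      have hsplit := p.take_spec hx
      have hxr : x ∈ (p.dropUntil x hx).support.tail := by
        have hcnt1 : (p.takeUntil x hx).support.count x = 1 :=
          p.count_support_takeUntil_eq_one hx
        have : p.support = (p.takeUntil x hx).support ++ (p.dropUntil x hx).support.tail := by
          conv_lhs => rw [← hsplit]
          rw [Walk.support_append]
        rw [this, List.count_append, hcnt1] at hcount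
        exact List.count_pos_iff.mp (by omega)
      obtain ⟨cl, rest, hdarts, hclpos, hcllen⟩ := exists_closed_subwalk _ hxr
      have hp' : p.darts = (p.takeUntil x hx).darts ++ (p.dropUntil x hx).darts := by
        conv_lhs => rw [← hsplit]
        rw [Walk.darts_append]
      have hclnb : cl.darts.Chain' (fun d₁ d₂ => d₂ ≠ d₁.symm) := by
        apply hnb.infix
        refine ⟨Walk.cons h (p.takeUntil x hx) |>.darts, rest, ?_⟩
        rw [Walk.darts_cons, Walk.darts_cons, hp', hdarts]
        simp
      have hlen : cl.length < L := by
        have h2 := congrArg Walk.length hsplit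
        rw [Walk.length_append] at h2
        rw [Walk.length_cons] at hL
        omega
      by_cases hc2 : cl.IsCycle
      · exact ⟨x, cl, hc2, hlen⟩
      · obtain ⟨u', c, hc, hle⟩ := IH cl.length hlen cl rfl hclpos hclnb hc2
        exact ⟨u', c, hc, hle.trans hlen⟩

lemma girth_le_length_of_cycle {v : V} {w : G.Walk v v} (hc : w.IsCycle) :
    G.girth ≤ w.length := by
  have h1 : G.egirth ≤ (w.length : ℕ∞) := by
    rw [SimpleGraph.egirth]
    exact iInf₂_le_of_le v w (iInf_le _ hc)
  have := ENat.toNat_le_toNat h1 (by simp)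
  simpa [SimpleGraph.girth] using this

/-- A closed non-backtracking walk whose length is the girth is a cycle. -/
lemma isCycle_of_geodesic {v : V} {c : G.Walk v v}
    (hnb : c.darts.Chain' (fun d₁ d₂ => d₂ ≠ d₁.symm))
    (hlen : c.length = G.girth) (hpos : 0 < G.girth) : c.IsCycle := by
  by_contra hcyc
  obtain ⟨u, c', hc', hlt⟩ := exists_cycle_of_closed_nb c.length c rfl
    (by omega) hnb hcyc
  have := girth_le_length_of_cycle hc'
  omega

/-- Rotating a cycle by one step. -/
lemma rotate_cycle_once {v : V} (c : G.Walk v v) (hc : c.IsCycle) :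
    ∃ (u : V) (c' : G.Walk u u), c'.IsCycle ∧ c'.length = c.length ∧
      c'.darts = c.darts.rotate 1 := by
  cases c with
  | nil => exact absurd hc (Walk.IsCycle.not_of_nil)
  | @cons v u _ h p =>
    rw [Walk.cons_isCycle_iff] at hc
    obtain ⟨hp, he⟩ := hc
    refine ⟨u, p.append (Walk.cons h Walk.nil), ?_, ?_, ?_⟩
    · rw [Walk.isCycle_def]
      refine ⟨?_, ?_, ?_⟩
      · rw [Walk.isTrail_def, Walk.edges_append, Walk.edges_cons, Walk.edges_nil]
        rw [List.nodup_append]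
        exact ⟨hp.isTrail.edges_nodup, by simp, by intro a ha b hb hab; simp at hb; subst hb; subst hab; exact he ha⟩
      · intro hn
        have := congrArg Walk.length hn
        simp [Walk.length_append] at this
      · have hps := hp.support_nodup
        rw [p.support_eq_cons, List.nodup_cons] at hps
        rw [Walk.support_append, Walk.support_cons, Walk.support_nil]
        rw [p.support_eq_cons]
        simp only [List.tail_cons, List.cons_append]
        rw [List.nodup_append]
        refine ⟨hps.2, by simp, ?_⟩
        intro a ha b hb hab
        simp only [List.tail_cons, List.mem_singleton] at hb
        subst hb
        subst hab
        exact hps.1 ha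
    · rw [Walk.length_append, Walk.length_cons, Walk.length_cons, Walk.length_nil]
    · rw [Walk.darts_append, Walk.darts_cons, Walk.darts_cons, Walk.darts_nil,
        List.rotate_cons_succ, List.rotate_zero]

end Aux

/-- A finite set of nodup lists of length `g` closed under rotation has cardinality
divisible by `g`. -/
lemma dvd_ncard_of_rotate_closed {α : Type*} (g : ℕ) (hg : 0 < g) :
    ∀ (N : ℕ) (D : Set (List α)), D.ncard = N → D.Finite →
    (∀ l ∈ D, l.length = g) → (∀ l ∈ D, l.Nodup) →
    (∀ l ∈ D, l.rotate 1 ∈ D) → g ∣ D.ncard := by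
  intro N
  induction N using Nat.strong_induction_on with
  | _ N IH =>
  intro D hN hfin hlen hnd hrot
  rcases D.eq_empty_or_nonempty with rfl | ⟨l, hl⟩
  · simp
  · have hrotk : ∀ k, l.rotate k ∈ D := by
      intro k
      induction k with
      | zero => simpa using hl
      | succ k ih => rw [← List.rotate_rotate]; exact hrot _ ih
    have hllen : l.length = g := hlen l hl
    have hlne : l ≠ [] := by intro h; rw [h] at hllen; simp at hllen; omega
    set O : Set (List α) := (fun k => l.rotate k) '' ↑(Finset.range g) with hO
    have hOD : O ⊆ D := by rintro _ ⟨k, -, rfl⟩; exact hrotk k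
    have hinj : Set.InjOn (fun k => l.rotate k) ↑(Finset.range g) := by
      intro i hi j hj hij
      simp only [Finset.coe_range, Set.mem_Iio] at hi hj
      have := (hnd l hl).rotate_congr hlne i j hij
      rw [hllen, Nat.mod_eq_of_lt hi, Nat.mod_eq_of_lt hj] at this
      exact this
    have hOcard : O.ncard = g := by
      rw [hO, Set.ncard_image_of_injOn hinj, Set.ncard_coe_finset, Finset.card_range]
    have hgN : g ≤ N := by
      rw [← hN, ← hOcard]
      exact Set.ncard_le_ncard hOD hfin
    have hmemO : ∀ x, x ∈ O ↔ ∃ k < g, l.rotate k = x := by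
      intro x; simp [hO]
    have hclosed : ∀ x ∈ D \ O, x.rotate 1 ∈ D \ O := by
      rintro x ⟨hxD, hxO⟩
      refine ⟨hrot x hxD, ?_⟩
      rintro ⟨k, hk, hkx⟩
      simp only [Finset.coe_range, Set.mem_Iio] at hk
      apply hxO
      have hxlen : x.length = g := hlen x hxD
      have hkx' : l.rotate k = x.rotate 1 := hkx
      have : x = l.rotate ((k + (g - 1)) % g) := by
        have h1 : (x.rotate 1).rotate (g - 1) = x := by
          rw [List.rotate_rotate]
          have : 1 + (g - 1) = g := by omega
          rw [this, ← hxlen, List.rotate_length]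
        rw [← h1, ← hkx', List.rotate_rotate, ← hllen, List.rotate_mod, hllen]
      rw [hmemO]
      exact ⟨(k + (g - 1)) % g, Nat.mod_lt _ hg, this.symm⟩
    have hdiff : (D \ O).ncard = N - g := by
      rw [Set.ncard_diff hOD (hfin.subset hOD), hN, hOcard]
    have hNpos : 0 < N := by omega
    have := IH (N - g) (by omega) (D \ O) hdiff (hfin.diff)
      (fun x hx => hlen x hx.1) (fun x hx => hnd x hx.1)
      (fun x hx => hclosed x hx)
    rw [hdiff] at this
    rw [hN]
    obtain ⟨c, hc⟩ := this
    exact ⟨c + 1, by rw [Nat.mul_add, Nat.mul_one, ← hc]; omega⟩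

lemma prefix_rotate_of_infix {α : Type*} {l x s t : List α}
    (h : s ++ x ++ t = l ++ l) :
    x <+: (l.rotate s.length) ++ (l.rotate s.length) := by
  set g := l.length with hg
  set i := s.length with hi
  have hlen : i + (x.length + t.length) = g + g := by
    have := congrArg List.length h
    simpa [List.length_append, hi, hg, Nat.add_assoc] using this
  have hdrop : x ++ t = (l ++ l).drop i := by
    rw [List.append_assoc] at h
    rw [← h, hi, List.drop_left]
  have hx : x <+: (l ++ l).drop i := hdrop ▸ List.prefix_append x t
  by_cases hle : i ≤ g
  · have h1 : (l ++ l).drop i = l.drop i ++ l := by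
      rw [List.drop_append, ← hg, Nat.sub_eq_zero_of_le hle, List.drop_zero]
    have h2 : (l.rotate i) ++ (l.rotate i) = (l.drop i ++ l) ++ l.take i := by
      rw [List.rotate_eq_drop_append_take (hg ▸ hle)]
      simp only [List.append_assoc]
      rw [← List.append_assoc (l.take i) (l.drop i) (l.take i), List.take_append_drop]
    rw [h2, ← h1]
    exact hx.trans (List.prefix_append _ _)
  · push_neg at hle
    have hig : i ≤ g + g := by omega
    set j := i - g with hj
    have hjg : j ≤ g := by omega
    have hrot : l.rotate i = l.rotate j := by
      rw [show i = g + j by omega, ← List.rotate_rotate, hg, List.rotate_length]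
    have h1 : (l ++ l).drop i = l.drop j := by
      rw [List.drop_append, ← hg, ← hj,
        List.drop_eq_nil_of_le (by omega), List.nil_append]
    rw [hrot, List.rotate_eq_drop_append_take (hg ▸ hjg)]
    rw [h1] at hx
    refine hx.trans ?_
    exact (List.prefix_append (l.drop j) (l.take j)).trans
      (List.prefix_append (l.drop j ++ l.take j) (l.drop j ++ l.take j))

section Count

variable {V : Type*} [Fintype V] (G : SimpleGraph V) [DecidableRel G.Adj]

/-- The "good" relation between consecutive darts: compatible and non-backtracking. -/
def DOk : G.Dart → G.Dart → Prop := fun a b => a.snd = b.fst ∧ b ≠ a.symm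

/-- Non-backtracking dart sequences of length `k`. -/
noncomputable def NBF (k : ℕ) : Finset (List.Vector G.Dart k) :=
  @Finset.filter _ (fun x => x.toList.Chain' (DOk G)) (Classical.decPred _) Finset.univ

lemma mem_NBF {k : ℕ} (x : List.Vector G.Dart k) :
    x ∈ NBF G k ↔ x.toList.Chain' (DOk G) := by
  simp [NBF]

lemma NBF_one_card : (NBF G 1).card = Fintype.card G.Dart := by
  have h : NBF G 1 = Finset.univ := by
    ext x
    simp only [Finset.mem_univ, iff_true, mem_NBF]
    obtain ⟨a, ha⟩ := List.length_eq_one_iff.mp x.toList_length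
    rw [ha]
    exact List.isChain_singleton a
  rw [h, Finset.card_univ, card_vector, pow_one]

lemma NBF_step_card (m : ℕ) :
    (G.minDegree - 1) * (NBF G (m + 1)).card ≤ (NBF G (m + 2)).card := by
  classical
  set f : List.Vector G.Dart (m + 2) → List.Vector G.Dart (m + 1) :=
    fun x => ⟨x.toList.dropLast, by simp⟩ with hf
  have hmaps : ∀ x ∈ NBF G (m + 2), f x ∈ NBF G (m + 1) := by
    intro x hx
    rw [mem_NBF] at hx ⊢
    exact hx.prefix (List.dropLast_prefix _)
  rw [Finset.card_eq_sum_card_fiberwise hmaps]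
  have hfiber : ∀ y ∈ NBF G (m + 1),
      G.minDegree - 1 ≤ ((NBF G (m + 2)).filter (fun x => f x = y)).card := by
    intro y hy
    have hyne : y.toList ≠ [] := by
      intro h
      have := y.toList_length
      rw [h] at this
      simp at this
    set e := y.toList.getLast hyne with he
    set E : Finset G.Dart :=
      (Finset.univ.filter (fun d : G.Dart => d.toProd.1 = e.snd)).erase e.symm with hE
    have hEcard : G.minDegree - 1 ≤ E.card := by
      have h1 : e.symm ∈ Finset.univ.filter (fun d : G.Dart => d.toProd.1 = e.snd) := by
        simp [Dart.symm]
      have h2 : (Finset.filter (fun d : G.Dart => d.toProd.1 = e.snd) Finset.univ).card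
          = G.degree e.snd := by
        convert G.dart_fst_fiber_card_eq_degree e.snd using 2
      rw [hE, Finset.card_erase_of_mem h1, h2]
      have := G.minDegree_le_degree e.snd
      omega
    have hinj : Set.InjOn (fun d : G.Dart => (⟨y.toList ++ [d], by simp⟩ : List.Vector G.Dart (m+2)))
        ↑E := by
      intro a _ b _ hab
      have : y.toList ++ [a] = y.toList ++ [b] := congrArg Subtype.val hab
      simpa using this
    have hmapsE : ∀ d ∈ E, (⟨y.toList ++ [d], by simp⟩ : List.Vector G.Dart (m+2)) ∈
        (NBF G (m + 2)).filter (fun x => f x = y) := by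
      intro d hd
      rw [hE, Finset.mem_erase, Finset.mem_filter] at hd
      erw [@Finset.mem_filter _ (fun x => f x = y) (fun a => List.Vector.instDecidableEq (f a) y) (NBF G (m + 2)) _, mem_NBF]
      refine ⟨?_, ?_⟩
      · show (y.toList ++ [d]).Chain' (DOk G)
        simp only [List.Chain']
        rw [List.isChain_append]
        refine ⟨(mem_NBF G y).mp hy, List.isChain_singleton d, ?_⟩
        intro a ha b hb
        rw [List.getLast?_eq_getLast hyne, Option.mem_def, Option.some_inj] at ha
        simp only [List.head?_cons, Option.mem_def, Option.some_inj] at hb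
        subst ha; subst hb
        exact ⟨hd.2.2.symm, hd.1⟩
      · rw [hf]
        apply Subtype.ext
        show (y.toList ++ [d]).dropLast = y.toList
        exact List.dropLast_concat
    calc G.minDegree - 1 ≤ E.card := hEcard
      _ ≤ _ := Finset.card_le_card_of_injOn _ hmapsE hinj
  calc (G.minDegree - 1) * (NBF G (m + 1)).card
      = ∑ _y ∈ NBF G (m + 1), (G.minDegree - 1) := by simp [Finset.sum_const, Nat.mul_comm]
    _ ≤ _ := Finset.sum_le_sum hfiber

lemma NBF_card_ge (j : ℕ) :
    (Fintype.card V) * G.minDegree * (G.minDegree - 1) ^ j ≤ (NBF G (j + 1)).card := by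
  induction j with
  | zero =>
    rw [NBF_one_card, dart_card_eq_sum_degrees, pow_zero, Nat.mul_one]
    calc Fintype.card V * G.minDegree = ∑ _v : V, G.minDegree := by
          simp [Finset.sum_const, Finset.card_univ, Nat.mul_comm]
      _ ≤ ∑ v : V, G.degree v := Finset.sum_le_sum (fun v _ => G.minDegree_le_degree v)
  | succ j ih =>
    calc Fintype.card V * G.minDegree * (G.minDegree - 1) ^ (j + 1)
        = (G.minDegree - 1) * (Fintype.card V * G.minDegree * (G.minDegree - 1) ^ j) := by ring
      _ ≤ (G.minDegree - 1) * (NBF G (j + 1)).card := Nat.mul_le_mul_left _ ih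
      _ ≤ (NBF G (j + 2)).card := NBF_step_card G j

end Count

/-- If `G` is a connected graph of girth `g` on `n` vertices with minimal degree
`d` and depth `δ ≥ 1` (every non-backtracking walk of length `δ` is contained in
a shortest closed geodesic), then `kiss(G) ≥ n·d·(d-1)^(δ-1)/g`. -/
theorem kissing_number_ge_of_depth {V : Type*} [Fintype V] (G : SimpleGraph V)
    [DecidableRel G.Adj] (n d g δ : ℕ) (hδ : 1 ≤ δ) (hconn : G.Connected)
    (hg : G.girth = g) (hmin : G.minDegree = d) (hn : Fintype.card V = n)
    (hdepth : ∀ (a b : V) (w : G.Walk a b), w.NonBacktracking → w.length = δ →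
      ContainedInClosedGeodesic G w g) :
    (kissingNumber G g : ℝ) ≥ n * d * ((d : ℝ) - 1) ^ (δ - 1) / g := by
  classical
  by_cases hg0 : g = 0
  · subst hg0
    rw [Nat.cast_zero, div_zero]
    exact Nat.cast_nonneg _
  by_cases hd0 : d = 0
  · subst hd0
    rw [Nat.cast_zero, mul_zero, zero_mul, zero_div]
    exact Nat.cast_nonneg _
  have hd1 : 1 ≤ d := Nat.one_le_iff_ne_zero.mpr hd0
  have hgpos : 0 < g := Nat.pos_of_ne_zero hg0
  obtain ⟨δ', rfl⟩ : ∃ δ', δ = δ' + 1 := ⟨δ - 1, by omega⟩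
  subst hmin
  subst hn
  -- the set of rooted shortest cycles and its dart lists
  set RC : Set ((v : V) × G.Walk v v) := {p | p.2.IsCycle ∧ p.2.length = g} with hRC
  set Ds : Set (List G.Dart) := (fun p : (v : V) × G.Walk v v => p.2.darts) '' RC with hDs
  have hinj : Set.InjOn (fun p : (v : V) × G.Walk v v => p.2.darts) RC := by
    rintro ⟨vp, wp⟩ hp ⟨vq, wq⟩ hq h
    simp only at h
    have hplen : wp.length = g := hp.2
    have hne : wp.darts ≠ [] := by
      intro hnil
      have := wp.length_darts
      rw [hnil] at this
      simp at this
      omega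
    obtain ⟨e, l0, hel⟩ := List.exists_cons_of_ne_nil hne
    have h1 : e.toProd.1 = vp := head_dart_fst wp e (by rw [hel]; rfl)
    have h2 : e.toProd.1 = vq := head_dart_fst wq e (by rw [← h, hel]; rfl)
    have hv : vp = vq := h1 ▸ h2
    subst hv
    obtain ⟨-, hw⟩ := walk_eq_of_darts_eq wp wq h
    rw [eq_of_heq hw]
  have hDlen : ∀ l ∈ Ds, l.length = g := by
    rintro _ ⟨⟨v, c⟩, ⟨hc, hlen⟩, rfl⟩
    simpa [Walk.length_darts] using hlen
  have hDnodup : ∀ l ∈ Ds, l.Nodup := by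
    rintro _ ⟨⟨v, c⟩, ⟨hc, hlen⟩, rfl⟩
    exact List.Nodup.of_map _ hc.isCircuit.isTrail.edges_nodup
  have hDmem : ∀ (v : V) (c : G.Walk v v), c.IsCycle → c.length = g → c.darts ∈ Ds := by
    intro v c hc hlen
    exact ⟨⟨v, c⟩, ⟨hc, hlen⟩, rfl⟩
  have hDrot1 : ∀ l ∈ Ds, l.rotate 1 ∈ Ds := by
    rintro _ ⟨⟨v, c⟩, ⟨hc, hlen⟩, rfl⟩
    obtain ⟨u, c', hc', hlen', hdarts⟩ := rotate_cycle_once c hc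
    rw [← hdarts]
    exact hDmem u c' hc' (hlen'.trans hlen)
  have hDrotk : ∀ l ∈ Ds, ∀ k, l.rotate k ∈ Ds := by
    intro l hl k
    induction k with
    | zero => simpa using hl
    | succ k ih => rw [← List.rotate_rotate]; exact hDrot1 _ ih
  have hDfin : Ds.Finite := by
    apply Set.Finite.subset
      ((Finset.univ.image (fun x : List.Vector G.Dart g => x.toList)).finite_toSet)
    intro l hl
    simp only [Finset.coe_image, Finset.coe_univ, Set.image_univ, Set.mem_range]
    exact ⟨⟨l, hDlen l hl⟩, rfl⟩
  have hRCfin : RC.Finite := Set.Finite.of_finite_image hDfin hinj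
  have hcard : Ds.ncard = RC.ncard := Set.ncard_image_of_injOn hinj
  -- every non-backtracking dart sequence of length δ is a prefix of a doubled rotated cycle
  have hex : ∀ x ∈ NBF G (δ' + 1), ∃ r, r ∈ Ds ∧ x.toList <+: r ++ r := by
    intro x hx
    rw [mem_NBF] at hx
    have hne : x.toList ≠ [] := by
      intro hnil
      have := x.toList_length
      rw [hnil] at this
      simp at this
    obtain ⟨e, l0, hel⟩ := List.exists_cons_of_ne_nil hne
    have hchA : (e :: l0).Chain' G.DartAdj := by
      rw [← hel]
      exact hx.imp (fun _ _ hab => hab.1)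
    obtain ⟨b, w, hw⟩ := exists_walk_of_dart_chain l0 e.toProd.1 e rfl hchA
    have hwx : w.darts = x.toList := by rw [hw, hel]
    have hnbw : w.NonBacktracking := by
      show w.darts.Chain' _
      rw [hwx]
      exact hx.imp (fun _ _ hab => hab.2)
    have hlw : w.length = δ' + 1 := by
      rw [← w.length_darts, hwx, x.toList_length]
    obtain ⟨v, c, hgeo, hclen, hinf⟩ := hdepth _ _ w hnbw hlw
    have hcyc : c.IsCycle := by
      apply isCycle_of_geodesic hgeo.2.1
      · rw [hclen, hg]
      · rw [hg]; exact hgpos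
    obtain ⟨s, t, hst⟩ := hinf
    refine ⟨c.darts.rotate s.length, hDrotk _ (hDmem v c hcyc hclen) _, ?_⟩
    rw [← hwx]
    exact prefix_rotate_of_infix hst
  set Φ : List.Vector G.Dart (δ' + 1) → List G.Dart :=
    fun x => if h : ∃ r, r ∈ Ds ∧ x.toList <+: r ++ r then h.choose else [] with hΦdef
  have hΦ : ∀ x ∈ NBF G (δ' + 1), Φ x ∈ Ds ∧ x.toList <+: Φ x ++ Φ x := by
    intro x hx
    have h := hex x hx
    rw [hΦdef]
    simp only [dif_pos h]
    exact h.choose_spec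
  have hmaps : ∀ x ∈ NBF G (δ' + 1), Φ x ∈ hDfin.toFinset := by
    intro x hx
    rw [Set.Finite.mem_toFinset]
    exact (hΦ x hx).1
  have hinjΦ : Set.InjOn Φ ↑(NBF G (δ' + 1)) := by
    intro x hx y hy hxy
    have hxp := (hΦ x hx).2
    have hyp := (hΦ y hy).2
    rw [List.prefix_iff_eq_take] at hxp hyp
    apply List.Vector.eq
    rw [hxp, hyp, x.toList_length, y.toList_length, hxy]
  have h1 : (NBF G (δ' + 1)).card ≤ Ds.ncard := by
    rw [Set.ncard_eq_toFinset_card _ hDfin]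
    exact Finset.card_le_card_of_injOn Φ hmaps hinjΦ
  have h2 : Fintype.card V * G.minDegree * (G.minDegree - 1) ^ δ' ≤ RC.ncard :=
    le_trans (NBF_card_ge G δ') (le_trans h1 (le_of_eq hcard))
  have h3 : g ∣ RC.ncard := by
    rw [← hcard]
    exact dvd_ncard_of_rotate_closed g hgpos Ds.ncard Ds rfl hDfin hDlen hDnodup hDrot1
  have hkiss : kissingNumber G g = RC.ncard / g := rfl
  -- final arithmetic
  rw [ge_iff_le, hkiss]
  have hcastdiv : ((RC.ncard / g : ℕ) : ℝ) = (RC.ncard : ℝ) / (g : ℝ) :=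
    Nat.cast_div h3 (by positivity)
  rw [hcastdiv]
  have hcast1 : ((G.minDegree : ℝ) - 1) = ((G.minDegree - 1 : ℕ) : ℝ) := by
    rw [Nat.cast_sub hd1, Nat.cast_one]
  rw [show (δ' + 1 - 1) = δ' from rfl, hcast1]
  rw [div_le_div_iff_of_pos_right (by positivity : (0:ℝ) < g)]
  calc ((Fintype.card V : ℝ)) * (G.minDegree : ℝ) * ((G.minDegree - 1 : ℕ) : ℝ) ^ δ'
      = ((Fintype.card V * G.minDegree * (G.minDegree - 1) ^ δ' : ℕ) : ℝ) := by push_cast; ring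
    _ ≤ (RC.ncard : ℝ) := Nat.cast_le.mpr h2
end

section
/- Let p ≡ 1 (mod 4) be prime and let k be even with q a natural number satisfying q ≡ 1 (mod 4), q² ≢ p (mod 16), and p^k < q < 2p^k. Then 16 does not divide p^⌈log_p(q²)⌉ − q² and 16 does not divide 2·p^⌈log_p(2q²)⌉ − 4q². -/
/-- Let `p ≡ 1 (mod 4)` be prime, `k` even, and `q` a natural number with
`q ≡ 1 (mod 4)`, `q² ≢ p (mod 16)`, and `p^k < q < 2p^k`. Then
`16 ∤ p^⌈log_p(q²)⌉ − q²` and `16 ∤ 2p^⌈log_p(2q²)⌉ − 4q²`. -/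
theorem sixteen_not_dvd (p q k : ℕ) (hp : p.Prime) (hp4 : p % 4 = 1)
    (hk : Even k) (hq4 : q % 4 = 1) (hq16 : q ^ 2 % 16 ≠ p % 16)
    (h1 : p ^ k < q) (h2 : q < 2 * p ^ k) :
    ¬ (16 : ℤ) ∣ ((p : ℤ) ^ (⌈Real.logb p ((q : ℝ) ^ 2)⌉.toNat) - (q : ℤ) ^ 2) ∧
    ¬ (16 : ℤ) ∣ (2 * (p : ℤ) ^ (⌈Real.logb p (2 * (q : ℝ) ^ 2)⌉.toNat) - 4 * (q : ℤ) ^ 2) := by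
  have hp2 : 2 ≤ p := hp.two_le
  have hp5 : 5 ≤ p := by omega
  constructor
  · -- compute the ceiling
    have hcast : ((q : ℝ) ^ 2) = ((q ^ 2 : ℕ) : ℝ) := by push_cast; ring
    have hceil : ⌈Real.logb p ((q : ℝ) ^ 2)⌉ = ((Nat.clog p (q ^ 2) : ℤ)) := by
      rw [hcast, Real.ceil_logb_natCast (by positivity), Int.clog_natCast]
    have hb : 1 < p := hp.one_lt
    have hlow : p ^ (2 * k) < q ^ 2 := by
      have := Nat.pow_lt_pow_left h1 (n := 2) (by norm_num)
      calc p ^ (2 * k) = (p ^ k) ^ 2 := by ring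
        _ < q ^ 2 := this
    have hhigh : q ^ 2 ≤ p ^ (2 * k + 1) := by
      have h2' : q ^ 2 < (2 * p ^ k) ^ 2 := Nat.pow_lt_pow_left h2 (by norm_num)
      have : (2 * p ^ k) ^ 2 ≤ p ^ (2 * k + 1) := by
        have : 4 * p ^ (2 * k) ≤ p * p ^ (2 * k) :=
          Nat.mul_le_mul_right _ (by omega)
        calc (2 * p ^ k) ^ 2 = 4 * p ^ (2 * k) := by ring
          _ ≤ p * p ^ (2 * k) := this
          _ = p ^ (2 * k + 1) := by ring
      omega
    have hclog : Nat.clog p (q ^ 2) = 2 * k + 1 := by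
      have hle : Nat.clog p (q ^ 2) ≤ 2 * k + 1 := (Nat.clog_le_iff_le_pow hb).2 hhigh
      have hlt : 2 * k < Nat.clog p (q ^ 2) := (Nat.lt_clog_iff_pow_lt hb).2 hlow
      omega
    rw [hceil, hclog]
    have hn : ((2 * k + 1 : ℤ)).toNat = 2 * k + 1 := by omega
    rw [show (((2 * k + 1 : ℕ) : ℤ)).toNat = 2 * k + 1 by omega]
    -- now arithmetic mod 16
    obtain ⟨m, hm⟩ := hk
    have hkm : 2 * k + 1 = 4 * m + 1 := by omega
    rw [hkm]
    -- p is odd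
    obtain ⟨t, ht⟩ : ∃ t, (p : ℤ) = 2 * t + 1 := ⟨(p : ℤ) / 2, by omega⟩
    have h4 : (16 : ℤ) ∣ (p : ℤ) ^ 4 - 1 := by
      rcases Int.even_or_odd t with ⟨s, hs⟩ | ⟨s, hs⟩
      · refine ⟨16*s^4 + 16*s^3 + 6*s^2 + s, ?_⟩
        subst hs; rw [ht]; ring
      · refine ⟨16*s^4 + 48*s^3 + 54*s^2 + 27*s + 5, ?_⟩
        subst hs; rw [ht]; ring
    have hpow : (16 : ℤ) ∣ ((p : ℤ) ^ 4) ^ m - 1 ^ m :=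
      dvd_trans h4 (sub_dvd_pow_sub_pow _ _ m)
    have hpp : (16 : ℤ) ∣ (p : ℤ) ^ (4 * m + 1) - (p : ℤ) := by
      have : (p : ℤ) ^ (4 * m + 1) - (p : ℤ) = (p : ℤ) * (((p : ℤ) ^ 4) ^ m - 1 ^ m) := by
        ring
      rw [this]
      exact Dvd.dvd.mul_left hpow _
    intro hdvd
    have h16 : (16 : ℤ) ∣ (q : ℤ) ^ 2 - (p : ℤ) := by
      have := dvd_sub hpp hdvd
      have heq : (p : ℤ) ^ (4 * m + 1) - (p : ℤ) - ((p : ℤ) ^ (4 * m + 1) - (q : ℤ) ^ 2)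
          = (q : ℤ) ^ 2 - p := by ring
      rwa [heq] at this
    have hQ : ((q ^ 2 : ℕ) : ℤ) = (q : ℤ) ^ 2 := by push_cast; ring
    rw [← hQ] at h16
    omega
  · -- second part: only needs p odd
    intro hdvd
    set N := (⌈Real.logb p (2 * (q : ℝ) ^ 2)⌉).toNat with hN
    have hodd : (p : ℤ) ^ N % 2 = 1 := by
      have : Odd ((p : ℤ) ^ N) := by
        refine Odd.pow ?_
        rw [Int.odd_iff]; omega
      rwa [Int.odd_iff] at this
    obtain ⟨c, hc⟩ := hdvd
    have hQ : ∃ Q : ℤ, (q : ℤ) ^ 2 = Q := ⟨_, rfl⟩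
    obtain ⟨Q, hQ⟩ := hQ
    rw [hQ] at hc
    set P := (p : ℤ) ^ N
    omega
end

section
/- For every positive integer n, the product over odd primes p with p² | n of (∑_{j=0}^{b_p} p^{-j}), where b_p = max{b : p^{2b} | n}, is at most (1/2)·log n + 1. -/
open Finset

open ArithmeticFunction ArithmeticFunction.zeta Function in
/-- For every positive integer `n`, the product over odd primes `p` with
`p² ∣ n` of `∑_{j=0}^{b_p} p^{-j}`, where `b_p = max{b : p^(2b) ∣ n}`, is at
most `(1/2)·log n + 1`. -/
theorem prod_geom_sum_le (n : ℕ) (hn : 0 < n) :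
    ∏ p ∈ n.primeFactors.filter (fun p => Odd p ∧ p ^ 2 ∣ n),
      ∑ j ∈ range (sSup {b : ℕ | p ^ (2 * b) ∣ n} + 1), ((p : ℝ) ^ j)⁻¹
      ≤ (1 / 2) * Real.log n + 1 := by
  classical
  set S := n.primeFactors.filter (fun p => Odd p ∧ p ^ 2 ∣ n) with hS
  have hprime : ∀ p ∈ S, p.Prime := fun p hp =>
    Nat.prime_of_mem_primeFactors (Finset.mem_filter.mp hp).1
  set B : ℕ → ℕ := fun p => sSup {b : ℕ | p ^ (2 * b) ∣ n} with hB
  -- each `p ^ (2 * B p)` divides `n`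
  have hdvd : ∀ p ∈ S, p ^ (2 * B p) ∣ n := by
    intro p hp
    have hp2 := (hprime p hp).two_le
    have hbdd : BddAbove {b : ℕ | p ^ (2 * b) ∣ n} := by
      refine ⟨n, fun b hb => ?_⟩
      have h1 : p ^ (2 * b) ≤ n := Nat.le_of_dvd hn hb
      have h2 : b < 2 ^ (2 * b) :=
        lt_of_lt_of_le (Nat.lt_two_pow_self (n := b)) (Nat.pow_le_pow_right (by norm_num) (by omega))
      exact le_of_lt (lt_of_lt_of_le h2 (le_trans (Nat.pow_le_pow_left hp2 _) h1))
    exact Nat.sSup_mem ⟨0, by simp⟩ hbdd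
  -- the auxiliary number `D`
  set D : ℕ := ∏ p ∈ S, p ^ (B p) with hD
  have hDpos : 0 < D := Finset.prod_pos fun p hp => pow_pos (hprime p hp).pos _
  have hD2dvd : D ^ 2 ∣ n := by
    have h1 : D ^ 2 = ∏ p ∈ S, p ^ (2 * B p) := by
      rw [hD, ← Finset.prod_pow]
      exact Finset.prod_congr rfl fun p _ => by rw [← pow_mul, mul_comm (B p) 2]
    rw [h1]
    have h2 : ∀ p ∈ S, p ^ (2 * B p) ∣ p ^ (n.factorization p) := by
      intro p hp
      exact pow_dvd_pow _ ((Nat.Prime.pow_dvd_iff_le_factorization (hprime p hp) hn.ne').mp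
        (hdvd p hp))
    calc ∏ p ∈ S, p ^ (2 * B p) ∣ ∏ p ∈ S, p ^ (n.factorization p) :=
          Finset.prod_dvd_prod_of_dvd _ _ h2
      _ ∣ ∏ p ∈ n.primeFactors, p ^ (n.factorization p) :=
          Finset.prod_dvd_prod_of_subset _ _ _ (Finset.filter_subset _ _)
      _ = n := by
          rw [← Nat.prod_factorization_eq_prod_primeFactors]
          exact Nat.factorization_prod_pow_eq_self hn.ne'
  have hD2le : D ^ 2 ≤ n := Nat.le_of_dvd hn hD2dvd
  -- the arithmetic function `d ↦ 1/d`
  set g : ArithmeticFunction ℝ := ⟨fun d => (d : ℝ)⁻¹, by simp⟩ with hg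
  have hgmul : g.IsMultiplicative := by
    constructor
    · simp [hg]
    · intro m k _
      show ((m * k : ℕ) : ℝ)⁻¹ = ((m : ℕ) : ℝ)⁻¹ * ((k : ℕ) : ℝ)⁻¹
      push_cast
      rw [mul_inv]
  have hmult : (g * (ζ : ArithmeticFunction ℝ)).IsMultiplicative :=
    hgmul.mul isMultiplicative_zeta.natCast
  -- each factor is `(g * ζ) (p ^ B p)`
  have hfac : ∀ p ∈ S,
      ∑ j ∈ range (B p + 1), ((p : ℝ) ^ j)⁻¹ = (g * (ζ : ArithmeticFunction ℝ)) (p ^ (B p)) := by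
    intro p hp
    rw [coe_mul_zeta_apply, Nat.sum_divisors_prime_pow (hprime p hp)]
    refine Finset.sum_congr rfl fun j _ => ?_
    show ((p : ℝ) ^ j)⁻¹ = ((p ^ j : ℕ) : ℝ)⁻¹
    push_cast
    ring
  -- the product equals a sum over the divisors of `D`
  have hpairwise : (S : Set ℕ).Pairwise (Nat.Coprime on fun p => p ^ (B p)) := by
    intro p hp q hq hne
    exact Nat.Coprime.pow _ _ ((Nat.coprime_primes (hprime p hp) (hprime q hq)).mpr hne)
  have hprod : ∏ p ∈ S, ∑ j ∈ range (B p + 1), ((p : ℝ) ^ j)⁻¹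
      = ∑ d ∈ D.divisors, ((d : ℕ) : ℝ)⁻¹ := by
    rw [Finset.prod_congr rfl hfac, ← hmult.map_prod _ S hpairwise, ← hD,
      coe_mul_zeta_apply]
    rfl
  have key : ∏ p ∈ S, ∑ j ∈ range (B p + 1), ((p : ℝ) ^ j)⁻¹
      ≤ (1 / 2) * Real.log n + 1 := by
    rw [hprod]
    have h3 : ∑ d ∈ D.divisors, ((d : ℕ) : ℝ)⁻¹ ≤ ∑ d ∈ Finset.Icc 1 D, ((d : ℕ) : ℝ)⁻¹ := by
      refine Finset.sum_le_sum_of_subset_of_nonneg ?_ (fun i _ _ => by positivity)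
      intro d hd
      exact Finset.mem_Icc.mpr ⟨Nat.pos_of_mem_divisors hd, Nat.divisor_le hd⟩
    have h4 : ∑ d ∈ Finset.Icc 1 D, ((d : ℕ) : ℝ)⁻¹ = (harmonic D : ℝ) := by
      rw [harmonic]
      push_cast
      rw [← Finset.Ico_add_one_right_eq_Icc, Finset.sum_Ico_eq_sum_range]
      simp [add_comm]
    have h5 : (harmonic D : ℝ) ≤ 1 + Real.log D := harmonic_le_one_add_log D
    have h6 : Real.log D ≤ (1 / 2) * Real.log n := by
      have hlog : Real.log ((D : ℝ) ^ 2) ≤ Real.log n := by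
        refine Real.log_le_log (by positivity) ?_
        exact_mod_cast hD2le
      rw [Real.log_pow] at hlog
      push_cast at hlog
      linarith
    linarith [h3, h4.le, h4.ge, h5, h6]
  exact key
end
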